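/- arXiv:1211.2713 — 6 statements merged into one kernel-verified Lean document; each statement's English description precedes it below -/
import Mathlib

section
/- Let κ ≥ 1, let B₁ be a real m₁ × d matrix and B₂ a real m₂ × d matrix such that (1/κ)·B₁ᵀB₁ ⪯ B₂ᵀB₂ ⪯ B₁ᵀB₁ in the Loewner order, and let P₁ and P₂ be Moore–Penrose pseudoinverses of B₁ᵀB₁ and B₂ᵀB₂ respectively. Then for every row vector x ∈ ℝᵈ, x P₁ xᵀ ≤ x P₂ xᵀ ≤ κ · x P₁ xᵀ. -/
open Matrix BigOperators

/-- `P` is a Moore–Penrose pseudoinverse of `M`. -/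
def IsMoorePenrose {d : ℕ} (M P : Matrix (Fin d) (Fin d) ℝ) : Prop :=
  M * P * M = M ∧ P * M * P = P ∧ (M * P)ᵀ = M * P ∧ (P * M)ᵀ = P * M

lemma mp_unique {d : ℕ} {M P Q : Matrix (Fin d) (Fin d) ℝ}
    (hP : IsMoorePenrose M P) (hQ : IsMoorePenrose M Q) : P = Q := by
  obtain ⟨hP1, hP2, hP3, hP4⟩ := hP
  obtain ⟨hQ1, hQ2, hQ3, hQ4⟩ := hQ
  have hMP : M * P = M * Q := by
    calc M * P = (M * P)ᵀ := hP3.symm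
      _ = ((M * Q * M) * P)ᵀ := by rw [hQ1]
      _ = ((M * Q) * (M * P))ᵀ := by rw [mul_assoc (M * Q) M P]
      _ = (M * P)ᵀ * (M * Q)ᵀ := transpose_mul _ _
      _ = (M * P) * (M * Q) := by rw [hP3, hQ3]
      _ = (M * P * M) * Q := by simp only [mul_assoc]
      _ = M * Q := by rw [hP1]
  have hPM : P * M = Q * M := by
    calc P * M = (P * M)ᵀ := hP4.symm
      _ = (P * (M * Q * M))ᵀ := by rw [hQ1]
      _ = ((P * M) * (Q * M))ᵀ := by simp only [mul_assoc]
      _ = (Q * M)ᵀ * (P * M)ᵀ := transpose_mul _ _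
      _ = (Q * M) * (P * M) := by rw [hP4, hQ4]
      _ = Q * (M * P * M) := by simp only [mul_assoc]
      _ = Q * M := by rw [hP1]
  calc P = P * M * P := hP2.symm
    _ = (Q * M) * P := by rw [hPM]
    _ = Q * (M * P) := mul_assoc _ _ _
    _ = Q * (M * Q) := by rw [hMP]
    _ = Q * M * Q := (mul_assoc _ _ _).symm
    _ = Q := hQ2

lemma mp_symm {d : ℕ} {M P : Matrix (Fin d) (Fin d) ℝ} (hM : Mᵀ = M)
    (hP : IsMoorePenrose M P) : Pᵀ = P := by
  refine (mp_unique ?_ hP)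
  obtain ⟨h1, h2, h3, h4⟩ := hP
  refine ⟨?_, ?_, ?_, ?_⟩
  · calc M * Pᵀ * M = (Mᵀ * P * Mᵀ)ᵀ := by simp [transpose_mul, mul_assoc]
      _ = (M * P * M)ᵀ := by rw [hM]
      _ = M := by rw [h1, hM]
  · calc Pᵀ * M * Pᵀ = (Pᵀ * Mᵀ) * Pᵀ := by rw [hM]
      _ = (P * M * P)ᵀ := by simp [transpose_mul, mul_assoc]
      _ = Pᵀ := by rw [h2]
  · calc (M * Pᵀ)ᵀ = P * M := by rw [transpose_mul, transpose_transpose, hM]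
      _ = (P * M)ᵀ := h4.symm
      _ = Mᵀ * Pᵀ := transpose_mul _ _
      _ = M * Pᵀ := by rw [hM]
  · calc (Pᵀ * M)ᵀ = M * P := by rw [transpose_mul, transpose_transpose, hM]
      _ = (M * P)ᵀ := h3.symm
      _ = Pᵀ * Mᵀ := transpose_mul _ _
      _ = Pᵀ * M := by rw [hM]

lemma eq_of_mulVec_eq {d : ℕ} {A B : Matrix (Fin d) (Fin d) ℝ}
    (h : ∀ v, A *ᵥ v = B *ᵥ v) : A = B := by
  ext i j
  simpa using congrFun (h (Pi.single j 1)) i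

lemma dot_helper {m n k : ℕ} (A : Matrix (Fin m) (Fin n) ℝ) (B : Matrix (Fin m) (Fin k) ℝ)
    (v : Fin n → ℝ) (w : Fin k → ℝ) :
    (A *ᵥ v) ⬝ᵥ (B *ᵥ w) = v ⬝ᵥ ((Aᵀ * B) *ᵥ w) := by
  rw [dotProduct_mulVec, dotProduct_mulVec, vecMul_mulVec]

lemma quad_nonneg {m n : ℕ} (B : Matrix (Fin m) (Fin n) ℝ) (v : Fin n → ℝ) :
    0 ≤ v ⬝ᵥ ((Bᵀ * B) *ᵥ v) := by
  rw [← dot_helper]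
  exact Finset.sum_nonneg fun i _ => mul_self_nonneg _

/-- If `(1/κ)·B₁ᵀB₁ ⪯ B₂ᵀB₂ ⪯ B₁ᵀB₁` then for every row vector `x`,
`x (B₁ᵀB₁)⁺ xᵀ ≤ x (B₂ᵀB₂)⁺ xᵀ ≤ κ · x (B₁ᵀB₁)⁺ xᵀ`. -/
theorem stretch_reference_switch (κ : ℝ) (hκ : 1 ≤ κ) (m₁ m₂ d : ℕ)
    (B₁ : Matrix (Fin m₁) (Fin d) ℝ) (B₂ : Matrix (Fin m₂) (Fin d) ℝ)
    (hlow : (B₂ᵀ * B₂ - κ⁻¹ • (B₁ᵀ * B₁)).PosSemidef)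
    (hupp : (B₁ᵀ * B₁ - B₂ᵀ * B₂).PosSemidef)
    (P₁ P₂ : Matrix (Fin d) (Fin d) ℝ)
    (hP₁ : IsMoorePenrose (B₁ᵀ * B₁) P₁)
    (hP₂ : IsMoorePenrose (B₂ᵀ * B₂) P₂) :
    ∀ x : Fin d → ℝ,
      x ⬝ᵥ P₁.mulVec x ≤ x ⬝ᵥ P₂.mulVec x ∧
      x ⬝ᵥ P₂.mulVec x ≤ κ * (x ⬝ᵥ P₁.mulVec x) := by
  set M₁ := B₁ᵀ * B₁ with hM₁def
  set M₂ := B₂ᵀ * B₂ with hM₂def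
  have hκ0 : (0:ℝ) < κ := lt_of_lt_of_le one_pos hκ
  have hκi : (0:ℝ) < κ⁻¹ := inv_pos.2 hκ0
  have hM₁sym : M₁ᵀ = M₁ := by rw [hM₁def]; simp [transpose_mul]
  have hM₂sym : M₂ᵀ = M₂ := by rw [hM₂def]; simp [transpose_mul]
  have hP₁s : P₁ᵀ = P₁ := mp_symm hM₁sym hP₁
  have hP₂s : P₂ᵀ = P₂ := mp_symm hM₂sym hP₂
  have qn₁ : ∀ v, 0 ≤ v ⬝ᵥ (M₁ *ᵥ v) := fun v => by rw [hM₁def]; exact quad_nonneg B₁ v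
  have qn₂ : ∀ v, 0 ≤ v ⬝ᵥ (M₂ *ᵥ v) := fun v => by rw [hM₂def]; exact quad_nonneg B₂ v
  have hM₁psd : M₁.PosSemidef := PosSemidef.of_dotProduct_mulVec_nonneg (by simpa [IsHermitian] using hM₁sym) (fun v => by simpa using qn₁ v)
  have hM₂psd : M₂.PosSemidef := PosSemidef.of_dotProduct_mulVec_nonneg (by simpa [IsHermitian] using hM₂sym) (fun v => by simpa using qn₂ v)
  -- kernel transfer
  have hker12 : ∀ v, M₁ *ᵥ v = 0 → M₂ *ᵥ v = 0 := by
    intro v hv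
    have h1 : 0 ≤ v ⬝ᵥ ((M₁ - M₂) *ᵥ v) := by simpa using hupp.dotProduct_mulVec_nonneg v
    rw [sub_mulVec, dotProduct_sub, hv, dotProduct_zero] at h1
    have h3 : v ⬝ᵥ (M₂ *ᵥ v) = 0 := le_antisymm (by linarith) (qn₂ v)
    exact (hM₂psd.dotProduct_mulVec_zero_iff v).1 (by simpa using h3)
  have hker21 : ∀ v, M₂ *ᵥ v = 0 → M₁ *ᵥ v = 0 := by
    intro v hv
    have h1 : 0 ≤ v ⬝ᵥ ((M₂ - κ⁻¹ • M₁) *ᵥ v) := by simpa using hlow.dotProduct_mulVec_nonneg v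
    rw [sub_mulVec, dotProduct_sub, hv, dotProduct_zero, smul_mulVec,
      dotProduct_smul, smul_eq_mul] at h1
    have h3 : v ⬝ᵥ (M₁ *ᵥ v) = 0 := le_antisymm (by nlinarith [qn₁ v]) (qn₁ v)
    exact (hM₁psd.dotProduct_mulVec_zero_iff v).1 (by simpa using h3)
  -- projection identities
  have hA₂ : M₂ * (M₂ * P₂) = M₂ := by
    calc M₂ * (M₂ * P₂) = M₂ᵀ * (M₂ * P₂)ᵀ := by rw [hM₂sym, hP₂.2.2.1]
      _ = ((M₂ * P₂) * M₂)ᵀ := (transpose_mul _ _).symm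
      _ = M₂ᵀ := by rw [hP₂.1]
      _ = M₂ := hM₂sym
  have hA₁ : M₁ * (M₁ * P₁) = M₁ := by
    calc M₁ * (M₁ * P₁) = M₁ᵀ * (M₁ * P₁)ᵀ := by rw [hM₁sym, hP₁.2.2.1]
      _ = ((M₁ * P₁) * M₁)ᵀ := (transpose_mul _ _).symm
      _ = M₁ᵀ := by rw [hP₁.1]
      _ = M₁ := hM₁sym
  have hQ1 : M₁ = M₁ * (M₂ * P₂) := by
    apply eq_of_mulVec_eq; intro v
    have hw : M₂ *ᵥ (v - (M₂ * P₂) *ᵥ v) = 0 := by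
      rw [mulVec_sub, mulVec_mulVec, hA₂, sub_self]
    have h := hker21 _ hw
    rw [mulVec_sub, mulVec_mulVec, sub_eq_zero] at h
    exact h
  have hQ2 : M₂ = M₂ * (M₁ * P₁) := by
    apply eq_of_mulVec_eq; intro v
    have hw : M₁ *ᵥ (v - (M₁ * P₁) *ᵥ v) = 0 := by
      rw [mulVec_sub, mulVec_mulVec, hA₁, sub_self]
    have h := hker12 _ hw
    rw [mulVec_sub, mulVec_mulVec, sub_eq_zero] at h
    exact h
  have key1 : (M₂ * P₂) * M₁ = M₁ := by
    have h : (M₁ * (M₂ * P₂))ᵀ = (M₂ * P₂) * M₁ := by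
      rw [transpose_mul, hP₂.2.2.1, hM₁sym]
    calc (M₂ * P₂) * M₁ = (M₁ * (M₂ * P₂))ᵀ := h.symm
      _ = M₁ᵀ := by rw [← hQ1]
      _ = M₁ := hM₁sym
  have key2 : (M₁ * P₁) * M₂ = M₂ := by
    have h : (M₂ * (M₁ * P₁))ᵀ = (M₁ * P₁) * M₂ := by
      rw [transpose_mul, hP₁.2.2.1, hM₂sym]
    calc (M₁ * P₁) * M₂ = (M₂ * (M₁ * P₁))ᵀ := h.symm
      _ = M₂ᵀ := by rw [← hQ2]
      _ = M₂ := hM₂sym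
  have hC₁ : M₁ * P₁ = P₁ * M₁ := by
    calc M₁ * P₁ = M₁ᵀ * P₁ᵀ := by rw [hM₁sym, hP₁s]
      _ = (P₁ * M₁)ᵀ := (transpose_mul _ _).symm
      _ = P₁ * M₁ := hP₁.2.2.2
  have hC₂ : M₂ * P₂ = P₂ * M₂ := by
    calc M₂ * P₂ = M₂ᵀ * P₂ᵀ := by rw [hM₂sym, hP₂s]
      _ = (P₂ * M₂)ᵀ := (transpose_mul _ _).symm
      _ = P₂ * M₂ := hP₂.2.2.2
  have hP₁' : M₁ * P₁ * P₁ = P₁ := by rw [hC₁]; exact hP₁.2.1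
  have hP₂' : M₂ * P₂ * P₂ = P₂ := by rw [hC₂]; exact hP₂.2.1
  have hfix₁ : (M₂ * P₂) * P₁ = P₁ := by
    calc (M₂ * P₂) * P₁ = (M₂ * P₂) * (M₁ * P₁ * P₁) := by rw [hP₁']
      _ = ((M₂ * P₂) * M₁) * (P₁ * P₁) := by simp only [mul_assoc]
      _ = M₁ * (P₁ * P₁) := by rw [key1]
      _ = M₁ * P₁ * P₁ := by rw [mul_assoc]
      _ = P₁ := hP₁'
  have hfix₂ : (M₁ * P₁) * P₂ = P₂ := by
    calc (M₁ * P₁) * P₂ = (M₁ * P₁) * (M₂ * P₂ * P₂) := by rw [hP₂']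
      _ = ((M₁ * P₁) * M₂) * (P₂ * P₂) := by simp only [mul_assoc]
      _ = M₂ * (P₂ * P₂) := by rw [key2]
      _ = M₂ * P₂ * P₂ := by rw [mul_assoc]
      _ = P₂ := hP₂'
  -- matrix identities for quadratic forms
  have E1 : P₁ᵀ * (M₁ * P₁) = P₁ := by rw [hP₁s, ← mul_assoc]; exact hP₁.2.1
  have E2 : P₂ᵀ * (M₂ * P₂) = P₂ := by rw [hP₂s, ← mul_assoc]; exact hP₂.2.1
  have E3 : P₁ᵀ * (M₂ * P₂) = P₁ := by
    have h := congrArg transpose hfix₁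
    rw [transpose_mul, hP₂.2.2.1, hP₁s] at h
    rw [hP₁s]; exact h
  have E4 : P₂ᵀ * (M₂ * P₁) = P₁ := by
    rw [hP₂s, ← mul_assoc, ← hC₂]; exact hfix₁
  have E5 : P₂ᵀ * (M₁ * P₁) = P₂ := by
    have h := congrArg transpose hfix₂
    rw [transpose_mul, hP₁.2.2.1, hP₂s] at h
    rw [hP₂s]; exact h
  have E6 : P₁ᵀ * (M₁ * P₂) = P₂ := by
    rw [hP₁s, ← mul_assoc, ← hC₁]; exact hfix₂
  intro x
  have e1 : (P₁ *ᵥ x) ⬝ᵥ (M₁ *ᵥ (P₁ *ᵥ x)) = x ⬝ᵥ P₁ *ᵥ x := by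
    rw [mulVec_mulVec, dot_helper, E1]
  have e2 : (P₂ *ᵥ x) ⬝ᵥ (M₂ *ᵥ (P₂ *ᵥ x)) = x ⬝ᵥ P₂ *ᵥ x := by
    rw [mulVec_mulVec, dot_helper, E2]
  have e3 : (P₁ *ᵥ x) ⬝ᵥ (M₂ *ᵥ (P₂ *ᵥ x)) = x ⬝ᵥ P₁ *ᵥ x := by
    rw [mulVec_mulVec, dot_helper, E3]
  have e4 : (P₂ *ᵥ x) ⬝ᵥ (M₂ *ᵥ (P₁ *ᵥ x)) = x ⬝ᵥ P₁ *ᵥ x := by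
    rw [mulVec_mulVec, dot_helper, E4]
  have e5 : (P₂ *ᵥ x) ⬝ᵥ (M₁ *ᵥ (P₁ *ᵥ x)) = x ⬝ᵥ P₂ *ᵥ x := by
    rw [mulVec_mulVec, dot_helper, E5]
  have e6 : (P₁ *ᵥ x) ⬝ᵥ (M₁ *ᵥ (P₂ *ᵥ x)) = x ⬝ᵥ P₂ *ᵥ x := by
    rw [mulVec_mulVec, dot_helper, E6]
  set p := x ⬝ᵥ P₁ *ᵥ x with hp
  set q := x ⬝ᵥ P₂ *ᵥ x with hq
  set s := (P₁ *ᵥ x) ⬝ᵥ (M₂ *ᵥ (P₁ *ᵥ x)) with hs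
  set t := (P₂ *ᵥ x) ⬝ᵥ (M₁ *ᵥ (P₂ *ᵥ x)) with ht
  have i2 : 0 ≤ p - s := by
    have h := hupp.dotProduct_mulVec_nonneg (P₁ *ᵥ x)
    simp only [star_trivial] at h
    rw [sub_mulVec, dotProduct_sub, e1, ← hs] at h
    linarith
  have i1 : 0 ≤ s - 2 * p + q := by
    have h := qn₂ (P₁ *ᵥ x - P₂ *ᵥ x)
    rw [mulVec_sub, dotProduct_sub, sub_dotProduct, sub_dotProduct,
      e3, e4, e2, ← hs] at h
    linarith
  have i4 : 0 ≤ q - κ⁻¹ * t := by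
    have h := hlow.dotProduct_mulVec_nonneg (P₂ *ᵥ x)
    simp only [star_trivial] at h
    rw [sub_mulVec, dotProduct_sub, e2, smul_mulVec, dotProduct_smul,
      smul_eq_mul, ← ht] at h
    linarith
  have i3 : 0 ≤ κ⁻¹ * κ⁻¹ * t - 2 * (κ⁻¹ * q) + p := by
    have h := qn₁ (κ⁻¹ • (P₂ *ᵥ x) - P₁ *ᵥ x)
    simp only [mulVec_sub, mulVec_smul, dotProduct_sub, sub_dotProduct,
      dotProduct_smul, smul_dotProduct, smul_eq_mul, e1, e5, e6, ← ht] at h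
    nlinarith [h]
  constructor
  · linarith
  · have i3' : 0 ≤ κ⁻¹ * t - 2 * q + κ * p := by
      have h5 := mul_nonneg hκ0.le i3
      have e : κ * (κ⁻¹ * κ⁻¹ * t - 2 * (κ⁻¹ * q) + p)
          = (κ * κ⁻¹) * (κ⁻¹ * t) - 2 * ((κ * κ⁻¹) * q) + κ * p := by ring
      rw [e, mul_inv_cancel₀ hκ0.ne'] at h5
      linarith
    linarith
end

section
/- Let C and D be real symmetric positive semidefinite d × d matrices, let Π be the orthogonal projection onto the range (column space) of C (i.e., Π is symmetric, Π² = Π, and the range of Π equals the range of C), and let P_C and P_{C+D} be Moore–Penrose pseudoinverses of C and C + D respectively. Then Π P_{C+D} Π ⪯ Π P_C Π in the Loewner order. -/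
open Matrix BigOperators

lemma mp_transpose {d : ℕ} {M P : Matrix (Fin d) (Fin d) ℝ}
    (hP : IsMoorePenrose M P) : IsMoorePenrose Mᵀ Pᵀ := by
  obtain ⟨h1, h2, h3, h4⟩ := hP
  refine ⟨?_, ?_, ?_, ?_⟩
  · calc Mᵀ * Pᵀ * Mᵀ = (P * M)ᵀ * Mᵀ := by rw [transpose_mul]
    _ = (M * (P * M))ᵀ := by rw [transpose_mul M (P * M)]
    _ = (M * P * M)ᵀ := by rw [mul_assoc]
    _ = Mᵀ := by rw [h1]
  · calc Pᵀ * Mᵀ * Pᵀ = (M * P)ᵀ * Pᵀ := by rw [transpose_mul]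
    _ = (P * (M * P))ᵀ := by rw [transpose_mul P (M * P)]
    _ = (P * M * P)ᵀ := by rw [mul_assoc]
    _ = Pᵀ := by rw [h2]
  · rw [← transpose_mul, transpose_transpose, h4]
  · rw [← transpose_mul, transpose_transpose, h3]

/-- Let `C, D` be PSD and `Π` the orthogonal projection onto the range of `C`.
Then `Π (C + D)⁺ Π ⪯ Π C⁺ Π` in the Loewner order. -/
theorem projected_pseudoinverse_monotone (d : ℕ)
    (C D Pi : Matrix (Fin d) (Fin d) ℝ)
    (hC : C.PosSemidef) (hD : D.PosSemidef)
    (hPiSymm : Piᵀ = Pi) (hPiIdem : Pi * Pi = Pi)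
    (hPiRange : LinearMap.range Pi.mulVecLin = LinearMap.range C.mulVecLin)
    (PC PCD : Matrix (Fin d) (Fin d) ℝ)
    (hPC : IsMoorePenrose C PC) (hPCD : IsMoorePenrose (C + D) PCD) :
    (Pi * PC * Pi - Pi * PCD * Pi).PosSemidef := by
  have hCsymm : Cᵀ = C := hC.1
  have hDsymm : Dᵀ = D := hD.1
  have hCDsymm : (C + D)ᵀ = C + D := by rw [transpose_add, hCsymm, hDsymm]
  have hPCs : PCᵀ = PC := mp_symm hCsymm hPC
  have hPCDs : PCDᵀ = PCD := mp_symm hCDsymm hPCD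
  have key : ∀ (A : Matrix (Fin d) (Fin d) ℝ), Aᵀ = A →
      ∀ u v, A.mulVec u ⬝ᵥ v = u ⬝ᵥ A.mulVec v := by
    intro A hA u v
    rw [dotProduct_mulVec, ← vecMul_transpose, hA]
  rw [posSemidef_iff_dotProduct_mulVec]
  constructor
  · show _ = _
    have : (Pi * PC * Pi - Pi * PCD * Pi)ᵀ = Pi * PC * Pi - Pi * PCD * Pi := by
      simp [transpose_sub, transpose_mul, hPiSymm, hPCs, hPCDs, mul_assoc]
    exact this
  · intro x
    obtain ⟨w, hw⟩ : Pi *ᵥ x ∈ LinearMap.range C.mulVecLin := by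
      rw [← hPiRange]; exact ⟨x, rfl⟩
    rw [mulVecLin_apply] at hw
    set y : Fin d → ℝ := Pi *ᵥ x with hy
    set z : Fin d → ℝ := PCD *ᵥ y with hz
    have e0 : star x ⬝ᵥ ((Pi * PC * Pi - Pi * PCD * Pi) *ᵥ x)
        = y ⬝ᵥ PC *ᵥ y - y ⬝ᵥ PCD *ᵥ y := by
      simp only [star_trivial, sub_mulVec, dotProduct_sub, ← mulVec_mulVec, hy,
        key Pi hPiSymm]
    have f6 : y ⬝ᵥ PC *ᵥ y = w ⬝ᵥ C *ᵥ w := by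
      rw [← hw, key C hCsymm, mulVec_mulVec, mulVec_mulVec, hPC.1]
    have f5 : y ⬝ᵥ PCD *ᵥ y = z ⬝ᵥ C *ᵥ z + z ⬝ᵥ D *ᵥ z := by
      have : z ⬝ᵥ (C + D) *ᵥ z = y ⬝ᵥ PCD *ᵥ y := by
        rw [hz, key PCD hPCDs, mulVec_mulVec, mulVec_mulVec, hPCD.2.1]
      rw [← this, add_mulVec, dotProduct_add]
    have f4 : y ⬝ᵥ PCD *ᵥ y = z ⬝ᵥ C *ᵥ w := by
      rw [← hz, dotProduct_comm, hw]
    have hwz : w ⬝ᵥ C *ᵥ z = z ⬝ᵥ C *ᵥ w := by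
      rw [← key C hCsymm, dotProduct_comm]
    have f3 : (w - z) ⬝ᵥ C *ᵥ (w - z)
        = w ⬝ᵥ C *ᵥ w - 2 * (z ⬝ᵥ C *ᵥ w) + z ⬝ᵥ C *ᵥ z := by
      rw [mulVec_sub, sub_dotProduct, dotProduct_sub, dotProduct_sub, hwz]
      ring
    have f1 : 0 ≤ (w - z) ⬝ᵥ C *ᵥ (w - z) := by simpa using hC.dotProduct_mulVec_nonneg (w - z)
    have f2 : 0 ≤ z ⬝ᵥ D *ᵥ z := by simpa using hD.dotProduct_mulVec_nonneg z
    rw [e0, f6]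
    linarith [f1, f2, f3, f4, f5]
end

section
/- Let A be a real n × d matrix of rank r, let P be a Moore–Penrose pseudoinverse of AᵀA, and let C be a real d × r matrix of rank r such that (1/2)·P ⪯ C Cᵀ ⪯ (3/2)·P in the Loewner order. Let p ∈ [1, ∞) and let q be its dual exponent (1/p + 1/q = 1, with q = ∞ and ‖z‖_∞ = maxᵢ |zᵢ| when p = 1). Then U = A C satisfies: if 1 ≤ p ≤ 2, then |||U|||_p ≤ √2 · (nd)^{1/p − 1/2} · d^{1/2} and ‖z‖_q ≤ √2 · ‖U z‖_p for all z ∈ ℝʳ; and if p ≥ 2, then |||U|||_p ≤ √2 · d^{1/2} and ‖z‖_q ≤ √2 · (nd)^{1/2 − 1/p} · ‖U z‖_p for all z ∈ ℝʳ. -/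
open Matrix BigOperators

/-- The ℓ_p norm of a vector. -/
noncomputable def lpNorm {n : ℕ} (p : ℝ) (v : Fin n → ℝ) : ℝ := (∑ i, |v i| ^ p) ^ (1 / p)

/-- The dual-norm `‖·‖_q` where `1/p + 1/q = 1`; when `p = 1` this is the max-norm. -/
noncomputable def dualNorm {n : ℕ} (p : ℝ) (v : Fin n → ℝ) : ℝ :=
  if p = 1 then ⨆ i, |v i| else lpNorm (p / (p - 1)) v

/-- The entrywise p-norm of a matrix: `(∑ i j, |M i j|^p)^(1/p)`. -/
noncomputable def entryNorm {n m : ℕ} (p : ℝ) (M : Matrix (Fin n) (Fin m) ℝ) : ℝ :=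
  (∑ i, ∑ j, |M i j| ^ p) ^ (1 / p)

lemma sum_rpow_le_rpow_sum' {ι : Type*} [Fintype ι] (x : ι → ℝ) (hx : ∀ i, 0 ≤ x i)
    {t : ℝ} (ht : 1 ≤ t) : ∑ i, x i ^ t ≤ (∑ i, x i) ^ t := by
  have ht0 : (0:ℝ) < t := lt_of_lt_of_le one_pos ht
  set s := ∑ i, x i with hs_def
  have hs : 0 ≤ s := Finset.sum_nonneg fun i _ => hx i
  rcases eq_or_lt_of_le hs with h | h
  · have hall : ∀ i, x i = 0 := by
      intro i
      have h1 : x i ≤ s := Finset.single_le_sum (fun j _ => hx j) (Finset.mem_univ i)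
      nlinarith [hx i]
    simp only [hall, Real.zero_rpow ht0.ne', Finset.sum_const, smul_zero]
    exact Real.rpow_nonneg hs t
  · have step : ∀ i, x i ^ t ≤ x i * s ^ (t - 1) := by
      intro i
      rcases eq_or_lt_of_le (hx i) with h0 | h0
      · rw [← h0, Real.zero_rpow ht0.ne', zero_mul]
      · have hxi : x i ≤ s := Finset.single_le_sum (fun j _ => hx j) (Finset.mem_univ i)
        calc x i ^ t = x i ^ (1 + (t - 1)) := by ring_nf
          _ = x i ^ (1:ℝ) * x i ^ (t - 1) := Real.rpow_add h0 _ _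
          _ = x i * x i ^ (t - 1) := by rw [Real.rpow_one]
          _ ≤ x i * s ^ (t - 1) := by
              have := Real.rpow_le_rpow (hx i) hxi (by linarith : (0:ℝ) ≤ t - 1)
              exact mul_le_mul_of_nonneg_left this (hx i)
    calc ∑ i, x i ^ t ≤ ∑ i, x i * s ^ (t - 1) := Finset.sum_le_sum fun i _ => step i
      _ = s * s ^ (t - 1) := by rw [← Finset.sum_mul]
      _ = s ^ (1:ℝ) * s ^ (t - 1) := by rw [Real.rpow_one]
      _ = s ^ t := by rw [← Real.rpow_add h]; ring_nf

lemma sum_rpow_le_card_rpow {ι : Type*} [Fintype ι] (x : ι → ℝ) (hx : ∀ i, 0 ≤ x i)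
    {t : ℝ} (ht0 : 0 < t) (ht1 : t ≤ 1) :
    ∑ i, x i ^ t ≤ (Fintype.card ι : ℝ) ^ (1 - t) * (∑ i, x i) ^ t := by
  rcases Nat.eq_zero_or_pos (Fintype.card ι) with hk | hk
  · have : IsEmpty ι := Fintype.card_eq_zero_iff.mp hk
    simp only [Finset.univ_eq_empty, Finset.sum_empty]
    positivity
  · have hkR : (0:ℝ) < (Fintype.card ι : ℝ) := by exact_mod_cast hk
    set k := (Fintype.card ι : ℝ)
    have hw : ∑ _i : ι, k⁻¹ = 1 := by
      rw [Finset.sum_const, Finset.card_univ, nsmul_eq_mul]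
      field_simp
      rfl
    have hp1 : (1:ℝ) ≤ 1 / t := by rw [le_div_iff₀ ht0]; linarith
    have jensen := Real.rpow_arith_mean_le_arith_mean_rpow Finset.univ
      (fun _ : ι => k⁻¹) (fun i => x i ^ t) (fun i _ => by positivity) hw
      (fun i _ => Real.rpow_nonneg (hx i) t) hp1
    -- jensen : (∑ i, k⁻¹ * x i ^ t) ^ (1/t) ≤ ∑ i, k⁻¹ * (x i ^ t) ^ (1/t)
    have hsimp : ∀ i : ι, (x i ^ t) ^ (1/t : ℝ) = x i := by
      intro i
      rw [← Real.rpow_mul (hx i), mul_one_div, div_self ht0.ne', Real.rpow_one]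
    simp only [hsimp, ← Finset.mul_sum] at jensen
    -- jensen : (k⁻¹ * ∑ x^t) ^ (1/t) ≤ k⁻¹ * ∑ x
    have hSt : 0 ≤ ∑ i, x i ^ t := Finset.sum_nonneg fun i _ => Real.rpow_nonneg (hx i) t
    have hSx : 0 ≤ ∑ i, x i := Finset.sum_nonneg fun i _ => hx i
    have hbase : 0 ≤ k⁻¹ * ∑ i, x i ^ t := by positivity
    have h2 : ((k⁻¹ * ∑ i, x i ^ t) ^ (1/t : ℝ)) ^ t ≤ (k⁻¹ * ∑ i, x i) ^ t :=
      Real.rpow_le_rpow (Real.rpow_nonneg hbase _) jensen ht0.le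
    rw [← Real.rpow_mul hbase, one_div_mul_cancel ht0.ne', Real.rpow_one] at h2
    rw [Real.mul_rpow (by positivity) hSx, Real.inv_rpow hkR.le, ← Real.rpow_neg hkR.le] at h2
    have h3 : ∑ i, x i ^ t ≤ k * (k ^ (-t) * (∑ i, x i) ^ t) := by
      have := mul_le_mul_of_nonneg_left h2 hkR.le
      rwa [← mul_assoc, mul_inv_cancel₀ hkR.ne', one_mul] at this
    calc ∑ i, x i ^ t ≤ k * (k ^ (-t) * (∑ i, x i) ^ t) := h3
      _ = (k ^ (1:ℝ) * k ^ (-t)) * (∑ i, x i) ^ t := by rw [Real.rpow_one]; ring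
      _ = k ^ (1 - t) * (∑ i, x i) ^ t := by rw [← Real.rpow_add hkR]; ring_nf

noncomputable def pnorm {ι : Type*} [Fintype ι] (p : ℝ) (v : ι → ℝ) : ℝ :=
  (∑ i, |v i| ^ p) ^ (1 / p : ℝ)

lemma pnorm_nonneg {ι : Type*} [Fintype ι] (p : ℝ) (v : ι → ℝ) : 0 ≤ pnorm p v :=
  Real.rpow_nonneg (Finset.sum_nonneg fun i _ => Real.rpow_nonneg (abs_nonneg _) _) _

lemma pnorm_anti {ι : Type*} [Fintype ι] {a b : ℝ} (ha : 0 < a) (hab : a ≤ b) (v : ι → ℝ) :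
    pnorm b v ≤ pnorm a v := by
  have hb : 0 < b := lt_of_lt_of_le ha hab
  have hS : 0 ≤ ∑ i, |v i| ^ a :=
    Finset.sum_nonneg fun i _ => Real.rpow_nonneg (abs_nonneg _) _
  have hrw : ∀ i : ι, |v i| ^ b = (|v i| ^ a) ^ (b / a : ℝ) := by
    intro i
    rw [← Real.rpow_mul (abs_nonneg _)]
    congr 1
    field_simp
  have key : ∑ i, |v i| ^ b ≤ (∑ i, |v i| ^ a) ^ (b / a : ℝ) := by
    simp_rw [hrw]
    exact sum_rpow_le_rpow_sum' _ (fun i => Real.rpow_nonneg (abs_nonneg _) _)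
      ((one_le_div ha).mpr hab)
  calc pnorm b v = (∑ i, |v i| ^ b) ^ (1 / b : ℝ) := rfl
    _ ≤ ((∑ i, |v i| ^ a) ^ (b / a : ℝ)) ^ (1 / b : ℝ) :=
        Real.rpow_le_rpow (Finset.sum_nonneg fun i _ => Real.rpow_nonneg (abs_nonneg _) _)
          key (by positivity)
    _ = (∑ i, |v i| ^ a) ^ (1 / a : ℝ) := by
        rw [← Real.rpow_mul hS]
        congr 1
        field_simp
    _ = pnorm a v := rfl

lemma pnorm_jump {ι : Type*} [Fintype ι] {a b : ℝ} (ha : 0 < a) (hab : a ≤ b) (v : ι → ℝ) :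
    pnorm a v ≤ (Fintype.card ι : ℝ) ^ (1 / a - 1 / b : ℝ) * pnorm b v := by
  have hb : 0 < b := lt_of_lt_of_le ha hab
  have hSb : 0 ≤ ∑ i, |v i| ^ b :=
    Finset.sum_nonneg fun i _ => Real.rpow_nonneg (abs_nonneg _) _
  have hrw : ∀ i : ι, |v i| ^ a = (|v i| ^ b) ^ (a / b : ℝ) := by
    intro i
    rw [← Real.rpow_mul (abs_nonneg _)]
    congr 1
    field_simp
  have key : ∑ i, |v i| ^ a ≤
      (Fintype.card ι : ℝ) ^ (1 - a / b : ℝ) * (∑ i, |v i| ^ b) ^ (a / b : ℝ) := by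
    simp_rw [hrw]
    exact sum_rpow_le_card_rpow _ (fun i => Real.rpow_nonneg (abs_nonneg _) _)
      (by positivity) (by rw [div_le_one hb]; exact hab)
  calc pnorm a v = (∑ i, |v i| ^ a) ^ (1 / a : ℝ) := rfl
    _ ≤ ((Fintype.card ι : ℝ) ^ (1 - a / b : ℝ) * (∑ i, |v i| ^ b) ^ (a / b : ℝ)) ^ (1 / a : ℝ) :=
        Real.rpow_le_rpow (Finset.sum_nonneg fun i _ => Real.rpow_nonneg (abs_nonneg _) _)
          key (by positivity)
    _ = (Fintype.card ι : ℝ) ^ (1 / a - 1 / b : ℝ) * pnorm b v := by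
        rw [Real.mul_rpow (Real.rpow_nonneg (Nat.cast_nonneg _) _) (Real.rpow_nonneg hSb _),
          ← Real.rpow_mul (Nat.cast_nonneg _), ← Real.rpow_mul hSb]
        congr 2
        · field_simp
        · rw [div_mul_div_comm, mul_one, mul_comm b a, div_mul_cancel_left₀ ha.ne', one_div]

lemma pnorm_two {ι : Type*} [Fintype ι] (v : ι → ℝ) :
    pnorm 2 v = Real.sqrt (∑ i, v i ^ 2) := by
  have h1 : ∀ i : ι, |v i| ^ (2:ℝ) = v i ^ 2 := by
    intro i
    rw [show (2:ℝ) = ((2:ℕ):ℝ) by norm_num, Real.rpow_natCast, sq_abs]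
  have h2 : 0 ≤ ∑ i, v i ^ 2 := Finset.sum_nonneg fun i _ => sq_nonneg _
  rw [pnorm]
  simp_rw [h1]
  rw [Real.sqrt_eq_rpow]

lemma quad_form_eq {n r : ℕ} (U : Matrix (Fin n) (Fin r) ℝ) (x : Fin r → ℝ) :
    x ⬝ᵥ ((Uᵀ * U) *ᵥ x) = (U *ᵥ x) ⬝ᵥ (U *ᵥ x) := by
  rw [← Matrix.mulVec_mulVec, Matrix.dotProduct_mulVec, Matrix.vecMul_transpose]

lemma dotProduct_self_nonneg {k : ℕ} (w : Fin k → ℝ) : 0 ≤ w ⬝ᵥ w :=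
  Finset.sum_nonneg fun i _ => mul_self_nonneg _

lemma eq_zero_of_dotProduct_self {k : ℕ} (w : Fin k → ℝ) (h : w ⬝ᵥ w ≤ 0) : w = 0 := by
  funext i
  have h2 : ∑ j, w j * w j ≤ 0 := h
  have h3 : ∀ j ∈ Finset.univ, (0:ℝ) ≤ w j * w j := fun j _ => mul_self_nonneg _
  have h4 : w i * w i = 0 := by
    by_contra hne
    have : 0 < w i * w i := lt_of_le_of_ne (mul_self_nonneg _) (Ne.symm hne)
    have := Finset.sum_pos' h3 ⟨i, Finset.mem_univ i, this⟩
    linarith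
  have := mul_self_eq_zero.mp h4
  simpa using this

open scoped MatrixOrder in
lemma key_claim {n d r : ℕ} (A : Matrix (Fin n) (Fin d) ℝ)
    (P : Matrix (Fin d) (Fin d) ℝ) (hP : IsMoorePenrose (Aᵀ * A) P)
    (C : Matrix (Fin d) (Fin r) ℝ) (hC : C.rank = r)
    (h₁ : (C * Cᵀ - (1 / 2 : ℝ) • P).PosSemidef)
    (h₂ : ((3 / 2 : ℝ) • P - C * Cᵀ).PosSemidef) :
    ((A * C)ᵀ * (A * C) - (1/2 : ℝ) • 1).PosSemidef ∧
    ((3/2 : ℝ) • 1 - (A * C)ᵀ * (A * C)).PosSemidef := by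
  obtain ⟨hP1, hP2, hP3, hP4⟩ := hP
  set M : Matrix (Fin d) (Fin d) ℝ := Aᵀ * A with hM
  set U : Matrix (Fin n) (Fin r) ℝ := A * C with hU
  set S : Matrix (Fin r) (Fin r) ℝ := Uᵀ * U with hS
  have hMsym : Mᵀ = M := by rw [hM, transpose_mul, transpose_transpose]
  have hSassoc : S = Cᵀ * M * C := by
    rw [hS, hU, hM, transpose_mul]
    simp only [Matrix.mul_assoc]
  -- U injective on vectors
  have hCinj : ∀ x : Fin r → ℝ, C *ᵥ x = 0 → x = 0 := by
    intro x hx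
    have hker : x ∈ LinearMap.ker C.mulVecLin := by
      simpa [Matrix.mulVecLin_apply] using hx
    have hrn := LinearMap.finrank_range_add_finrank_ker C.mulVecLin
    rw [show Module.finrank ℝ (LinearMap.range C.mulVecLin) = r from hC] at hrn
    rw [Module.finrank_pi] at hrn
    simp only [Fintype.card_fin] at hrn
    have hker0 : Module.finrank ℝ (LinearMap.ker C.mulVecLin) = 0 := by omega
    have : LinearMap.ker C.mulVecLin = ⊥ := Submodule.finrank_eq_zero.mp hker0
    rw [this] at hker
    simpa using hker
  have hUinj : ∀ x : Fin r → ℝ, U *ᵥ x = 0 → x = 0 := by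
    intro x hx
    set v : Fin d → ℝ := C *ᵥ x with hv
    have hAv : A *ᵥ v = 0 := by
      rw [hv, Matrix.mulVec_mulVec, ← hU, hx]
    have hMv : M *ᵥ v = 0 := by
      rw [hM, ← Matrix.mulVec_mulVec, hAv, Matrix.mulVec_zero]
    have hPv : v ⬝ᵥ (P *ᵥ v) = 0 := by
      conv_lhs => rw [← hP2]
      rw [← Matrix.mulVec_mulVec, Matrix.dotProduct_mulVec]
      have : v ᵥ* (P * M) = (P * M)ᵀ *ᵥ v := by rw [← Matrix.vecMul_transpose, transpose_transpose]
      rw [this, hP4, ← Matrix.mulVec_mulVec, hMv, Matrix.mulVec_zero]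
      simp
    have hCv : v ⬝ᵥ ((C * Cᵀ) *ᵥ v) ≤ 0 := by
      have := h₂.dotProduct_mulVec_nonneg v
      simp only [star_trivial] at this
      rw [Matrix.sub_mulVec, Matrix.smul_mulVec, dotProduct_sub, dotProduct_smul] at this
      rw [hPv] at this
      simpa using this
    have hCtv : Cᵀ *ᵥ v = 0 := by
      apply eq_zero_of_dotProduct_self
      rw [show C * Cᵀ = Cᵀᵀ * Cᵀ from by rw [transpose_transpose], quad_form_eq] at hCv
      exact hCv
    have hv0 : v = 0 := by
      apply eq_zero_of_dotProduct_self
      have h5 : v ⬝ᵥ v = v ⬝ᵥ (C *ᵥ x) := by rw [← hv]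
      have h6 : v ᵥ* C = Cᵀ *ᵥ v := by
        rw [show C = Cᵀᵀ from (transpose_transpose C).symm, Matrix.vecMul_transpose,
          transpose_transpose]
      rw [h5, Matrix.dotProduct_mulVec, h6, hCtv, zero_dotProduct]
    exact hCinj x (by rw [← hv, hv0])
  -- conjugation identities
  have hMPM : M * (P * (M * C)) = M * C := by
    rw [← Matrix.mul_assoc, ← Matrix.mul_assoc, hP1]
  have hconj1 : S * S - (1/2:ℝ) • S = (M * C)ᵀ * (C * Cᵀ - (1/2:ℝ) • P) * (M * C) := by
    rw [transpose_mul, hMsym, hSassoc]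
    simp only [Matrix.mul_sub, Matrix.sub_mul, Matrix.mul_smul, Matrix.smul_mul,
      Matrix.mul_assoc, hMPM]
  have hconj2 : (3/2:ℝ) • S - S * S = (M * C)ᵀ * ((3/2:ℝ) • P - C * Cᵀ) * (M * C) := by
    rw [transpose_mul, hMsym, hSassoc]
    simp only [Matrix.mul_sub, Matrix.sub_mul, Matrix.mul_smul, Matrix.smul_mul,
      Matrix.mul_assoc, hMPM]
  have psd1 : (S * S - (1/2:ℝ) • S).PosSemidef := by
    rw [hconj1]
    have := h₁.conjTranspose_mul_mul_same (M * C)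
    rwa [conjTranspose_eq_transpose_of_trivial] at this
  have psd2 : ((3/2:ℝ) • S - S * S).PosSemidef := by
    rw [hconj2]
    have := h₂.conjTranspose_mul_mul_same (M * C)
    rwa [conjTranspose_eq_transpose_of_trivial] at this
  -- S is positive definite
  have hSpsd : S.PosSemidef := by
    rw [hS, ← conjTranspose_eq_transpose_of_trivial]
    exact Matrix.posSemidef_conjTranspose_mul_self U
  have hSposdef : S.PosDef := by
    refine Matrix.PosDef.of_dotProduct_mulVec_pos hSpsd.1 fun x hx => ?_
    have h0 : star x ⬝ᵥ S *ᵥ x = (U *ᵥ x) ⬝ᵥ (U *ᵥ x) := by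
      rw [star_trivial, hS, quad_form_eq]
    rw [h0]
    rcases eq_or_lt_of_le (dotProduct_self_nonneg (U *ᵥ x)) with h | h
    · exfalso
      exact hx (hUinj x (eq_zero_of_dotProduct_self _ h.ge))
    · exact h
  -- square root of S
  obtain ⟨T, hTsa, -, hTT⟩ := CFC.exists_sqrt_of_isSelfAdjoint_of_quasispectrumRestricts (a := S)
    hSpsd.isHermitian (QuasispectrumRestricts.nnreal_of_nonneg hSpsd.nonneg)
  have hTsym : Tᵀ = T := by
    have := hTsa.star_eq
    rwa [star_eq_conjTranspose, conjTranspose_eq_transpose_of_trivial] at this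
  have hTdet : IsUnit T.det := by
    have hdS : 0 < S.det := hSposdef.det_pos
    rw [← hTT, Matrix.det_mul] at hdS
    have : T.det ≠ 0 := by intro h; rw [h] at hdS; simp at hdS
    exact this.isUnit
  have hTinv1 : T⁻¹ * T = 1 := Matrix.nonsing_inv_mul T hTdet
  have hTinv2 : T * T⁻¹ = 1 := Matrix.mul_nonsing_inv T hTdet
  have hTinvsym : T⁻¹ᵀ = T⁻¹ := by rw [Matrix.transpose_nonsing_inv, hTsym]
  have hid1 : T⁻¹ * (S * S) * T⁻¹ = S := by
    have h : T⁻¹ * (S * S) * T⁻¹ = (T⁻¹ * T) * (T * T) * (T * T⁻¹) := by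
      rw [← hTT]; noncomm_ring
    rw [h, hTinv1, hTinv2, one_mul, mul_one, hTT]
  have hid2 : T⁻¹ * S * T⁻¹ = 1 := by
    have h : T⁻¹ * S * T⁻¹ = (T⁻¹ * T) * (T * T⁻¹) := by
      rw [← hTT]; noncomm_ring
    rw [h, hTinv1, hTinv2, one_mul]
  have hA1 : S - (1/2:ℝ) • 1 = T⁻¹ * (S * S - (1/2:ℝ) • S) * T⁻¹ := by
    rw [Matrix.mul_sub, Matrix.sub_mul, Matrix.mul_smul, Matrix.smul_mul, hid1, hid2]
  have hA2 : (3/2:ℝ) • 1 - S = T⁻¹ * ((3/2:ℝ) • S - S * S) * T⁻¹ := by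
    rw [Matrix.mul_sub, Matrix.sub_mul, Matrix.mul_smul, Matrix.smul_mul, hid1, hid2]
  constructor
  · rw [hA1]
    have := psd1.mul_mul_conjTranspose_same T⁻¹
    rwa [conjTranspose_eq_transpose_of_trivial, hTinvsym] at this
  · rw [hA2]
    have := psd2.mul_mul_conjTranspose_same T⁻¹
    rwa [conjTranspose_eq_transpose_of_trivial, hTinvsym] at this

lemma lpNorm_eq_pnorm {k : ℕ} (p : ℝ) (v : Fin k → ℝ) : lpNorm p v = pnorm p v := rfl

lemma entryNorm_eq_pnorm {k m : ℕ} (p : ℝ) (M : Matrix (Fin k) (Fin m) ℝ) :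
    entryNorm p M = pnorm p (fun ij : Fin k × Fin m => M ij.1 ij.2) := by
  rw [entryNorm, pnorm, Fintype.sum_prod_type]

lemma lpNorm_two {k : ℕ} (v : Fin k → ℝ) : lpNorm 2 v = Real.sqrt (∑ i, v i ^ 2) := by
  rw [lpNorm_eq_pnorm, pnorm_two]

lemma entryNorm_two {k m : ℕ} (M : Matrix (Fin k) (Fin m) ℝ) :
    entryNorm 2 M = Real.sqrt (∑ i, ∑ j, M i j ^ 2) := by
  rw [entryNorm_eq_pnorm, pnorm_two, Fintype.sum_prod_type]

/-- If `(1/2)(AᵀA)⁺ ⪯ CCᵀ ⪯ (3/2)(AᵀA)⁺`, then `U = AC` is a well-conditioned basis: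
for `1 ≤ p ≤ 2`, `|||U|||_p ≤ √2 (nd)^(1/p−1/2) d^(1/2)` and `‖z‖_q ≤ √2 ‖Uz‖_p`;
for `p ≥ 2`, `|||U|||_p ≤ √2 d^(1/2)` and `‖z‖_q ≤ √2 (nd)^(1/2−1/p) ‖Uz‖_p`. -/
theorem well_conditioned_basis (n d r : ℕ) (A : Matrix (Fin n) (Fin d) ℝ)
    (hrank : A.rank = r)
    (P : Matrix (Fin d) (Fin d) ℝ) (hP : IsMoorePenrose (Aᵀ * A) P)
    (C : Matrix (Fin d) (Fin r) ℝ) (hC : C.rank = r)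
    (h₁ : (C * Cᵀ - (1 / 2 : ℝ) • P).PosSemidef)
    (h₂ : ((3 / 2 : ℝ) • P - C * Cᵀ).PosSemidef)
    (p : ℝ) (hp : 1 ≤ p) :
    (p ≤ 2 →
      entryNorm p (A * C) ≤
        Real.sqrt 2 * ((n : ℝ) * d) ^ (1 / p - 1 / 2) * (d : ℝ) ^ ((1 : ℝ) / 2) ∧
      ∀ z : Fin r → ℝ, dualNorm p z ≤ Real.sqrt 2 * lpNorm p ((A * C).mulVec z)) ∧
    (2 ≤ p →
      entryNorm p (A * C) ≤ Real.sqrt 2 * (d : ℝ) ^ ((1 : ℝ) / 2) ∧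
      ∀ z : Fin r → ℝ,
        dualNorm p z ≤
          Real.sqrt 2 * ((n : ℝ) * d) ^ (1 / 2 - 1 / p) * lpNorm p ((A * C).mulVec z)) := by
  obtain ⟨cl1, cl2⟩ := key_claim A P hP C hC h₁ h₂
  set U : Matrix (Fin n) (Fin r) ℝ := A * C with hU_def
  have hp0 : (0:ℝ) < p := lt_of_lt_of_le one_pos hp
  have hrd : r ≤ d := by rw [← hrank]; exact Matrix.rank_le_width A
  have key1 : ∀ z : Fin r → ℝ, z ⬝ᵥ z ≤ 2 * ((U *ᵥ z) ⬝ᵥ (U *ᵥ z)) := by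
    intro z
    have h := cl1.dotProduct_mulVec_nonneg z
    rw [star_trivial, Matrix.sub_mulVec, Matrix.smul_mulVec, Matrix.one_mulVec,
      dotProduct_sub, dotProduct_smul, quad_form_eq] at h
    simp only [smul_eq_mul] at h
    linarith
  have key2 : ∀ j, (Uᵀ * U) j j ≤ 3/2 := by
    intro j
    have h := cl2.dotProduct_mulVec_nonneg (Pi.single j 1)
    rw [star_trivial, Matrix.sub_mulVec, Matrix.smul_mulVec, Matrix.one_mulVec,
      dotProduct_sub, dotProduct_smul] at h
    simp only [smul_eq_mul, Matrix.mulVec_single, single_dotProduct, mul_one, one_mul,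
      Pi.single_eq_same, MulOpposite.op_one, one_smul, Matrix.col_apply] at h
    linarith
  have hsum2 : ∑ i, ∑ j, U i j ^ 2 ≤ 2 * (d:ℝ) := by
    have h1 : ∑ i, ∑ j, U i j ^ 2 = ∑ j, (Uᵀ * U) j j := by
      rw [Finset.sum_comm]
      refine Finset.sum_congr rfl fun j _ => ?_
      rw [Matrix.mul_apply]
      refine Finset.sum_congr rfl fun i _ => ?_
      rw [Matrix.transpose_apply, sq]
    rw [h1]
    calc ∑ j, (Uᵀ * U) j j ≤ ∑ _j : Fin r, (3/2 : ℝ) := Finset.sum_le_sum fun j _ => key2 j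
      _ = (3/2) * r := by
          rw [Finset.sum_const, Finset.card_univ, Fintype.card_fin, nsmul_eq_mul]; ring
      _ ≤ 2 * d := by
          have h2 : (r:ℝ) ≤ d := Nat.cast_le.mpr hrd
          nlinarith [Nat.cast_nonneg (α := ℝ) r]
  have hU2 : entryNorm 2 U ≤ Real.sqrt 2 * (d:ℝ) ^ ((1:ℝ)/2) := by
    rw [entryNorm_two]
    calc Real.sqrt (∑ i, ∑ j, U i j ^ 2) ≤ Real.sqrt (2 * d) := Real.sqrt_le_sqrt hsum2
      _ = Real.sqrt 2 * Real.sqrt d := Real.sqrt_mul (by norm_num) _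
      _ = Real.sqrt 2 * (d:ℝ) ^ ((1:ℝ)/2) := by rw [Real.sqrt_eq_rpow (d:ℝ)]
  have hz2 : ∀ z : Fin r → ℝ, lpNorm 2 z ≤ Real.sqrt 2 * lpNorm 2 (U *ᵥ z) := by
    intro z
    rw [lpNorm_two, lpNorm_two]
    have h1 : ∑ i, z i ^ 2 ≤ 2 * ∑ i, (U *ᵥ z) i ^ 2 := by
      have h := key1 z
      have e1 : z ⬝ᵥ z = ∑ i, z i ^ 2 := by simp [dotProduct, sq]
      have e2 : (U *ᵥ z) ⬝ᵥ (U *ᵥ z) = ∑ i, (U *ᵥ z) i ^ 2 := by simp [dotProduct, sq]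
      rw [e1, e2] at h
      exact h
    calc Real.sqrt (∑ i, z i ^ 2) ≤ Real.sqrt (2 * ∑ i, (U *ᵥ z) i ^ 2) := Real.sqrt_le_sqrt h1
      _ = Real.sqrt 2 * Real.sqrt (∑ i, (U *ᵥ z) i ^ 2) := Real.sqrt_mul (by norm_num) _
  constructor
  · -- case p ≤ 2
    intro hp2
    have he : (0:ℝ) ≤ 1/p - 1/2 := by
      have h2 : 1/2 ≤ 1/p := one_div_le_one_div_of_le hp0 hp2
      linarith
    constructor
    · rw [entryNorm_eq_pnorm]
      calc pnorm p (fun ij : Fin n × Fin r => U ij.1 ij.2)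
          ≤ (Fintype.card (Fin n × Fin r) : ℝ) ^ (1/p - 1/2 : ℝ) *
            pnorm 2 (fun ij : Fin n × Fin r => U ij.1 ij.2) := pnorm_jump hp0 hp2 _
        _ ≤ ((n:ℝ) * d) ^ (1/p - 1/2 : ℝ) * (Real.sqrt 2 * (d:ℝ) ^ ((1:ℝ)/2)) := by
            apply mul_le_mul
            · apply Real.rpow_le_rpow (by positivity) ?_ he
              rw [Fintype.card_prod, Fintype.card_fin, Fintype.card_fin]
              push_cast
              have h2 : (r:ℝ) ≤ d := Nat.cast_le.mpr hrd
              nlinarith [Nat.cast_nonneg (α := ℝ) n]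
            · rw [← entryNorm_eq_pnorm]
              exact hU2
            · rw [← entryNorm_eq_pnorm]
              exact Real.rpow_nonneg (Finset.sum_nonneg fun i _ =>
                Finset.sum_nonneg fun j _ => Real.rpow_nonneg (abs_nonneg _) _) _
            · positivity
        _ = Real.sqrt 2 * ((n:ℝ) * d) ^ (1/p - 1/2 : ℝ) * (d:ℝ) ^ ((1:ℝ)/2) := by ring
    · intro z
      by_cases hp1 : p = 1
      · subst hp1
        rw [dualNorm, if_pos rfl]
        have hsup : (⨆ i, |z i|) ≤ lpNorm 2 z := by
          rcases isEmpty_or_nonempty (Fin r) with hre | hre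
          · rw [Real.iSup_of_isEmpty]
            rw [lpNorm_eq_pnorm]
            exact pnorm_nonneg _ _
          · apply ciSup_le
            intro i
            rw [lpNorm_two, ← Real.sqrt_sq_eq_abs]
            apply Real.sqrt_le_sqrt
            exact Finset.single_le_sum (fun j _ => sq_nonneg (z j)) (Finset.mem_univ i)
        calc (⨆ i, |z i|) ≤ lpNorm 2 z := hsup
          _ ≤ Real.sqrt 2 * lpNorm 2 (U *ᵥ z) := hz2 z
          _ ≤ Real.sqrt 2 * lpNorm 1 (U *ᵥ z) := by
              refine mul_le_mul_of_nonneg_left ?_ (Real.sqrt_nonneg 2)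
              rw [lpNorm_eq_pnorm, lpNorm_eq_pnorm]
              exact pnorm_anti one_pos one_le_two _
      · rw [dualNorm, if_neg hp1]
        have hp1' : 1 < p := lt_of_le_of_ne hp (Ne.symm hp1)
        have hq2 : 2 ≤ p / (p - 1) := by
          rw [le_div_iff₀ (by linarith)]
          linarith
        calc lpNorm (p / (p-1)) z ≤ lpNorm 2 z := by
              rw [lpNorm_eq_pnorm, lpNorm_eq_pnorm]
              exact pnorm_anti two_pos hq2 z
          _ ≤ Real.sqrt 2 * lpNorm 2 (U *ᵥ z) := hz2 z
          _ ≤ Real.sqrt 2 * lpNorm p (U *ᵥ z) := by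
              refine mul_le_mul_of_nonneg_left ?_ (Real.sqrt_nonneg 2)
              rw [lpNorm_eq_pnorm, lpNorm_eq_pnorm]
              exact pnorm_anti hp0 hp2 _
  · -- case 2 ≤ p
    intro hp2
    have hp1 : p ≠ 1 := by intro h; rw [h] at hp2; norm_num at hp2
    have he : (0:ℝ) ≤ 1/2 - 1/p := by
      have h2 : 1/p ≤ 1/2 := one_div_le_one_div_of_le two_pos hp2
      linarith
    constructor
    · rw [entryNorm_eq_pnorm]
      calc pnorm p (fun ij : Fin n × Fin r => U ij.1 ij.2)
          ≤ pnorm 2 (fun ij : Fin n × Fin r => U ij.1 ij.2) := pnorm_anti two_pos hp2 _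
        _ = entryNorm 2 U := (entryNorm_eq_pnorm 2 U).symm
        _ ≤ Real.sqrt 2 * (d:ℝ) ^ ((1:ℝ)/2) := hU2
    · intro z
      rw [dualNorm, if_neg hp1]
      have hq0 : 0 < p / (p - 1) := div_pos (by linarith) (by linarith)
      have hqle2 : p / (p - 1) ≤ 2 := by
        rw [div_le_iff₀ (by linarith)]
        linarith
      have hqe : 1/(p/(p-1)) - 1/2 = 1/2 - 1/p := by
        rw [one_div_div]
        field_simp
        ring
      have c1 : lpNorm (p/(p-1)) z ≤ (r:ℝ) ^ (1/2 - 1/p : ℝ) * lpNorm 2 z := by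
        have h := pnorm_jump hq0 hqle2 z
        rw [Fintype.card_fin, hqe] at h
        rw [lpNorm_eq_pnorm, lpNorm_eq_pnorm]
        exact h
      have c2 : lpNorm 2 (U *ᵥ z) ≤ (n:ℝ) ^ (1/2 - 1/p : ℝ) * lpNorm p (U *ᵥ z) := by
        have h := pnorm_jump two_pos hp2 (U *ᵥ z)
        rw [Fintype.card_fin] at h
        rw [lpNorm_eq_pnorm, lpNorm_eq_pnorm]
        exact h
      have hlpnn : 0 ≤ lpNorm p (U *ᵥ z) := by
        rw [lpNorm_eq_pnorm]; exact pnorm_nonneg _ _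
      calc lpNorm (p/(p-1)) z ≤ (r:ℝ) ^ (1/2 - 1/p : ℝ) * lpNorm 2 z := c1
        _ ≤ (r:ℝ) ^ (1/2 - 1/p : ℝ) * (Real.sqrt 2 * lpNorm 2 (U *ᵥ z)) :=
            mul_le_mul_of_nonneg_left (hz2 z) (by positivity)
        _ ≤ (r:ℝ) ^ (1/2 - 1/p : ℝ) *
            (Real.sqrt 2 * ((n:ℝ) ^ (1/2 - 1/p : ℝ) * lpNorm p (U *ᵥ z))) := by
            refine mul_le_mul_of_nonneg_left ?_ (by positivity)
            exact mul_le_mul_of_nonneg_left c2 (Real.sqrt_nonneg 2)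
        _ = Real.sqrt 2 * ((r:ℝ) * n) ^ (1/2 - 1/p : ℝ) * lpNorm p (U *ᵥ z) := by
            rw [Real.mul_rpow (Nat.cast_nonneg r) (Nat.cast_nonneg n)]
            ring
        _ ≤ Real.sqrt 2 * ((n:ℝ) * d) ^ (1/2 - 1/p : ℝ) * lpNorm p (U *ᵥ z) := by
            refine mul_le_mul_of_nonneg_right ?_ hlpnn
            refine mul_le_mul_of_nonneg_left ?_ (Real.sqrt_nonneg 2)
            refine Real.rpow_le_rpow (by positivity) ?_ he
            have h2 : (r:ℝ) ≤ d := Nat.cast_le.mpr hrd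
            nlinarith [Nat.cast_nonneg (α := ℝ) n]
end

section
/- Let p ∈ [1, ∞) with dual exponent q (1/p + 1/q = 1, with q = ∞ and ‖z‖_∞ = maxᵢ |zᵢ| when p = 1). Let A be a real n × d matrix and Ã a real ñ × d matrix such that (1/2)·‖A x‖_p ≤ ‖Ã x‖_p ≤ (3/2)·‖A x‖_p for all x ∈ ℝᵈ. Let C be a real d × r matrix, and suppose Ũ = Ã C satisfies |||Ũ|||_p ≤ α and ‖z‖_q ≤ β · ‖Ũ z‖_p for all z ∈ ℝʳ. Then U = A C satisfies |||U|||_p ≤ 2α and ‖z‖_q ≤ 2β · ‖U z‖_p for all z ∈ ℝʳ. -/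
open Matrix BigOperators

lemma lpNorm_nonneg' {n : ℕ} (p : ℝ) (v : Fin n → ℝ) : 0 ≤ lpNorm p v :=
  Real.rpow_nonneg (Finset.sum_nonneg fun i _ => Real.rpow_nonneg (abs_nonneg _) _) _

lemma lpNorm_rpow' {n : ℕ} {p : ℝ} (hp : p ≠ 0) (v : Fin n → ℝ) :
    lpNorm p v ^ p = ∑ i, |v i| ^ p := by
  unfold lpNorm
  rw [← Real.rpow_mul (Finset.sum_nonneg fun i _ => Real.rpow_nonneg (abs_nonneg _) _),
    one_div_mul_cancel hp, Real.rpow_one]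

/-- If `At` is a `(1/2, 3/2)` ℓ_p-approximation of `A` and `AtC` is an
`(α, β, p)`-well-conditioned basis, then `AC` is a `(2α, 2β, p)`-well-conditioned basis. -/
theorem basis_transfer (p : ℝ) (hp : 1 ≤ p) (n nA d r : ℕ)
    (A : Matrix (Fin n) (Fin d) ℝ) (At : Matrix (Fin nA) (Fin d) ℝ)
    (happrox : ∀ x : Fin d → ℝ,
      (1 / 2 : ℝ) * lpNorm p (A.mulVec x) ≤ lpNorm p (At.mulVec x) ∧
      lpNorm p (At.mulVec x) ≤ (3 / 2 : ℝ) * lpNorm p (A.mulVec x))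
    (C : Matrix (Fin d) (Fin r) ℝ) (α β : ℝ)
    (hα : entryNorm p (At * C) ≤ α)
    (hβ : ∀ z : Fin r → ℝ, dualNorm p z ≤ β * lpNorm p ((At * C).mulVec z)) :
    entryNorm p (A * C) ≤ 2 * α ∧
    ∀ z : Fin r → ℝ, dualNorm p z ≤ 2 * β * lpNorm p ((A * C).mulVec z) := by
  have hp0 : (0:ℝ) < p := lt_of_lt_of_le one_pos hp
  have hpne : p ≠ 0 := ne_of_gt hp0
  have key : ∀ x, lpNorm p (A.mulVec x) ≤ 2 * lpNorm p (At.mulVec x) := by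
    intro x; have := (happrox x).1; linarith
  constructor
  · -- entrywise norm bound
    have hcol : ∀ (B : Matrix (Fin n) (Fin d) ℝ) (j : Fin r),
        ∑ i, |(B * C) i j| ^ p = lpNorm p (B.mulVec (fun k => C k j)) ^ p := by
      intro B j
      rw [lpNorm_rpow' hpne]
      simp [Matrix.mul_apply, Matrix.mulVec, dotProduct]
    have hcol' : ∀ (j : Fin r),
        ∑ i, |(At * C) i j| ^ p = lpNorm p (At.mulVec (fun k => C k j)) ^ p := by
      intro j
      rw [lpNorm_rpow' hpne]
      simp [Matrix.mul_apply, Matrix.mulVec, dotProduct]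
    have hsum : ∑ i, ∑ j, |(A * C) i j| ^ p ≤ 2 ^ p * ∑ i, ∑ j, |(At * C) i j| ^ p := by
      rw [Finset.sum_comm, Finset.sum_comm (s := Finset.univ) (t := Finset.univ)
        (f := fun i j => |(At * C) i j| ^ p), Finset.mul_sum]
      apply Finset.sum_le_sum
      intro j _
      rw [hcol A j, hcol' j]
      have h1 := key (fun k => C k j)
      have h2 : lpNorm p (A.mulVec fun k => C k j) ^ p ≤
          (2 * lpNorm p (At.mulVec fun k => C k j)) ^ p :=
        Real.rpow_le_rpow (lpNorm_nonneg' _ _) h1 (le_of_lt hp0)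
      calc lpNorm p (A.mulVec fun k => C k j) ^ p
          ≤ (2 * lpNorm p (At.mulVec fun k => C k j)) ^ p := h2
        _ = 2 ^ p * lpNorm p (At.mulVec fun k => C k j) ^ p := by
            rw [Real.mul_rpow (by norm_num) (lpNorm_nonneg' _ _)]
    have hα0 : 0 ≤ α := le_trans (Real.rpow_nonneg (Finset.sum_nonneg fun i _ =>
      Finset.sum_nonneg fun j _ => Real.rpow_nonneg (abs_nonneg _) _) _) hα
    have step : entryNorm p (A * C) ≤ 2 * entryNorm p (At * C) := by
      unfold entryNorm
      have h3 : (∑ i, ∑ j, |(A * C) i j| ^ p) ^ (1/p) ≤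
          (2 ^ p * ∑ i, ∑ j, |(At * C) i j| ^ p) ^ (1/p) :=
        Real.rpow_le_rpow (Finset.sum_nonneg fun i _ =>
          Finset.sum_nonneg fun j _ => Real.rpow_nonneg (abs_nonneg _) _) hsum
          (by positivity)
      rw [Real.mul_rpow (by positivity) (by positivity),
        ← Real.rpow_mul (by norm_num : (0:ℝ) ≤ 2), mul_one_div_cancel hpne,
        Real.rpow_one] at h3
      exact h3
    linarith
  · -- distortion bound
    intro z
    have happ := (happrox (C.mulVec z)).2
    rw [Matrix.mulVec_mulVec] at happ
    have hLb := hβ z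
    have hL0 : 0 ≤ lpNorm p ((A * C).mulVec z) := lpNorm_nonneg' _ _
    rcases Nat.eq_zero_or_pos r with hr | hr
    · -- r = 0 : everything vanishes
      subst hr
      have hz : dualNorm p z = 0 := by
        unfold dualNorm
        split_ifs with h
        · exact Real.iSup_of_isEmpty _
        · have hp1 : 1 < p := lt_of_le_of_ne hp (Ne.symm h)
          have hq0 : 0 < p / (p - 1) := by
            apply div_pos <;> linarith
          unfold lpNorm
          simp
          exact Real.zero_rpow (div_ne_zero (by linarith) (by linarith))
      have hmv : (A * C).mulVec z = 0 := by
        funext i; simp [Matrix.mulVec, dotProduct]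
      rw [hz, hmv]
      have : lpNorm p (0 : Fin n → ℝ) = 0 := by
        unfold lpNorm
        rw [show (∑ i : Fin n, |(0 : Fin n → ℝ) i| ^ p) = 0 by
          simp [Real.zero_rpow hpne]]
        rw [Real.zero_rpow]; positivity
      rw [this]; simp
    · -- r > 0 : β must be nonnegative
      have i0 : Fin r := ⟨0, hr⟩
      set e : Fin r → ℝ := fun i => if i = i0 then 1 else 0 with he
      have hd : (1:ℝ) ≤ dualNorm p e := by
        unfold dualNorm
        split_ifs with h
        · have : Nonempty (Fin r) := ⟨i0⟩
          have hle : |e i0| ≤ ⨆ i, |e i| :=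
            le_ciSup (f := fun i => |e i|) (Set.Finite.bddAbove (Set.finite_range _)) i0
          simpa [he] using hle
        · have hp1 : 1 < p := lt_of_le_of_ne hp (Ne.symm h)
          have hq0 : 0 < p / (p - 1) := by
            apply div_pos <;> linarith
          unfold lpNorm
          have hsum : (∑ i, |e i| ^ (p / (p - 1))) = 1 := by
            rw [Finset.sum_eq_single i0]
            · simp [he]
            · intro b _ hb
              simp [he, hb, Real.zero_rpow (ne_of_gt hq0)]
            · intro hmem; exact absurd (Finset.mem_univ i0) hmem
          rw [hsum, Real.one_rpow]
      have hL0' : 0 ≤ lpNorm p ((At * C).mulVec e) := lpNorm_nonneg' _ _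
      have hβ0 : 0 ≤ β := by
        have := hβ e
        nlinarith
      have hL0'' : 0 ≤ lpNorm p ((At * C).mulVec z) := lpNorm_nonneg' _ _
      have hAC : (A * C).mulVec z = A.mulVec (C.mulVec z) :=
        (Matrix.mulVec_mulVec z A C).symm
      rw [hAC]
      have h4 := mul_le_mul_of_nonneg_left happ hβ0
      have h5 := mul_nonneg hβ0 (lpNorm_nonneg' p (A.mulVec (C.mulVec z)))
      nlinarith
end

section
/- Let 1 ≤ p ≤ p' ≤ 2, let A be a real n × d matrix of rank r, and let Ã be a real ñ × d matrix such that (1/2)·‖A x‖_{p'} ≤ ‖Ã x‖_{p'} ≤ (3/2)·‖A x‖_{p'} for all x ∈ ℝᵈ. Let P̃ be a Moore–Penrose pseudoinverse of ÃᵀÃ, and let C be a real d × r matrix of rank r with (1/2)·P̃ ⪯ C Cᵀ ⪯ (3/2)·P̃ in the Loewner order. Let q be the dual exponent of p (with q = ∞ and the max-norm convention when p = 1). Then U = A C satisfies |||U|||_p ≤ 2√2 · (nd)^{1/p − 1/p'} · (ñd)^{1/p' − 1/2} · d^{1/2} and ‖z‖_q ≤ 3 · ‖U z‖_p for all z ∈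 ℝʳ; in particular U is an (α, β, p)-well-conditioned basis for A with αβ ≤ 6√2 · n^{1/p − 1/p'} · ñ^{1/p' − 1/2} · d^{1/p}. -/
open Matrix BigOperators

lemma sum_abs_rpow_nonneg {ι : Type*} [Fintype ι] (v : ι → ℝ) (p : ℝ) :
    0 ≤ ∑ i, |v i| ^ p :=
  Finset.sum_nonneg fun i _ => Real.rpow_nonneg (abs_nonneg _) _

lemma lp_anti {ι : Type*} [Fintype ι] (v : ι → ℝ) {p q : ℝ} (hp : 0 < p) (hpq : p ≤ q) :
    (∑ i, |v i| ^ q) ^ (1/q) ≤ (∑ i, |v i| ^ p) ^ (1/p) := by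
  have hq : 0 < q := lt_of_lt_of_le hp hpq
  set S := ∑ i, |v i| ^ p with hSdef
  have hS : 0 ≤ S := sum_abs_rpow_nonneg v p
  have hqp : 1 + (q - p)/p = q/p := by field_simp; ring
  have hterm : ∀ i, |v i| ^ q ≤ |v i| ^ p * S ^ ((q - p)/p) := by
    intro i
    have h1 : |v i| ^ p ≤ S :=
      Finset.single_le_sum (f := fun i => |v i| ^ p)
        (fun i _ => Real.rpow_nonneg (abs_nonneg _) _) (Finset.mem_univ i)
    have h2 : |v i| ^ (q - p) ≤ S ^ ((q - p)/p) := by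
      have e : |v i| ^ (q - p) = (|v i| ^ p) ^ ((q - p)/p) := by
        rw [← Real.rpow_mul (abs_nonneg _)]
        congr 1
        field_simp
      rw [e]
      exact Real.rpow_le_rpow (Real.rpow_nonneg (abs_nonneg _) _) h1
        (div_nonneg (by linarith) hp.le)
    calc |v i| ^ q = |v i| ^ p * |v i| ^ (q - p) := by
          rw [← Real.rpow_add' (abs_nonneg _) (by simp [ne_of_gt hq])]
          ring_nf
      _ ≤ |v i| ^ p * S ^ ((q - p)/p) :=
          mul_le_mul_of_nonneg_left h2 (Real.rpow_nonneg (abs_nonneg _) _)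
  have hsum : ∑ i, |v i| ^ q ≤ S ^ (q/p) := by
    calc ∑ i, |v i| ^ q ≤ ∑ i, |v i| ^ p * S ^ ((q - p)/p) :=
          Finset.sum_le_sum fun i _ => hterm i
      _ = S * S ^ ((q - p)/p) := by rw [← Finset.sum_mul]
      _ = S ^ (1 + (q - p)/p) := by
          rw [Real.rpow_add' hS (by rw [hqp]; positivity), Real.rpow_one]
      _ = S ^ (q/p) := by rw [hqp]
  calc (∑ i, |v i| ^ q) ^ (1/q) ≤ (S ^ (q/p)) ^ (1/q) :=
        Real.rpow_le_rpow (sum_abs_rpow_nonneg v q) hsum (by positivity)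
    _ = S ^ (1/p) := by
        rw [← Real.rpow_mul hS]
        congr 1
        field_simp

lemma lp_card {ι : Type*} [Fintype ι] (v : ι → ℝ) {p q : ℝ} (hp : 0 < p) (hpq : p ≤ q) :
    (∑ i, |v i| ^ p) ^ (1/p) ≤
      (Fintype.card ι : ℝ) ^ (1/p - 1/q) * (∑ i, |v i| ^ q) ^ (1/q) := by
  have hq : 0 < q := lt_of_lt_of_le hp hpq
  rcases Nat.eq_zero_or_pos (Fintype.card ι) with hcard | hcard
  · have : IsEmpty ι := Fintype.card_eq_zero_iff.mp hcard
    simp only [Finset.univ_eq_empty, Finset.sum_empty, Fintype.card_eq_zero, Nat.cast_zero]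
    rw [Real.zero_rpow (by positivity : (1:ℝ)/p ≠ 0),
      Real.zero_rpow (by positivity : (1:ℝ)/q ≠ 0), mul_zero]
  · set N : ℝ := (Fintype.card ι : ℝ) with hNdef
    have hN : 0 < N := by simp only [hNdef]; exact_mod_cast hcard
    set X := ∑ i, |v i| ^ p with hXdef
    set T := ∑ i, |v i| ^ q with hTdef
    have hX : 0 ≤ X := sum_abs_rpow_nonneg v p
    have hT : 0 ≤ T := sum_abs_rpow_nonneg v q
    have hqp1 : (1:ℝ) ≤ q/p := (one_le_div hp).mpr hpq
    have pm := Real.rpow_arith_mean_le_arith_mean_rpow Finset.univ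
      (fun _ : ι => 1/N) (fun i => |v i| ^ p)
      (fun i _ => by positivity)
      (by rw [Finset.sum_const, Finset.card_univ, nsmul_eq_mul, ← hNdef, mul_one_div, div_self hN.ne'])
      (fun i _ => Real.rpow_nonneg (abs_nonneg _) _)
      hqp1
    have e1 : ∑ i : ι, (1/N) * |v i| ^ p = X/N := by
      rw [← Finset.mul_sum, ← hXdef]; ring
    have e2 : ∑ i : ι, (1/N) * (|v i| ^ p) ^ (q/p) = T/N := by
      have : ∀ i : ι, (|v i| ^ p) ^ (q/p) = |v i| ^ q := by
        intro i
        rw [← Real.rpow_mul (abs_nonneg _)]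
        congr 1
        field_simp
      simp_rw [this]
      rw [← Finset.mul_sum, ← hTdef]; ring
    rw [e1, e2] at pm
    -- pm : (X/N)^(q/p) ≤ T/N
    have hXN : X/N ≤ (T/N) ^ (p/q) := by
      have := Real.rpow_le_rpow (Real.rpow_nonneg (by positivity) _) pm
        (le_of_lt (div_pos hp hq))
      rwa [← Real.rpow_mul (by positivity : (0:ℝ) ≤ X/N),
        div_mul_div_comm, mul_comm q p, div_self (by positivity : p*q ≠ 0),
        Real.rpow_one] at this
    have hXb : X ≤ N ^ (1 - p/q) * T ^ (p/q) := by
      have h3 : (T/N) ^ (p/q) = T ^ (p/q) / N ^ (p/q) :=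
        Real.div_rpow hT hN.le _
      have h4 : X ≤ N * (T ^ (p/q) / N ^ (p/q)) := by
        rw [← h3]
        calc X = N * (X/N) := by field_simp
          _ ≤ N * ((T/N) ^ (p/q)) := by
              exact mul_le_mul_of_nonneg_left hXN hN.le
      calc X ≤ N * (T ^ (p/q) / N ^ (p/q)) := h4
        _ = N ^ (1 - p/q) * T ^ (p/q) := by
            rw [Real.rpow_sub hN, Real.rpow_one]
            ring
    calc X ^ (1/p) ≤ (N ^ (1 - p/q) * T ^ (p/q)) ^ (1/p) :=
          Real.rpow_le_rpow hX hXb (by positivity)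
      _ = N ^ (1/p - 1/q) * T ^ (1/q) := by
          rw [Real.mul_rpow (by positivity) (Real.rpow_nonneg hT _),
            ← Real.rpow_mul hN.le, ← Real.rpow_mul hT]
          have hp0 : p ≠ 0 := hp.ne'
          have eB : p/q * (1/p) = 1/q := by
            rw [mul_one_div, div_div, mul_comm, ← div_div, div_self hp0]
          have eA : (1 - p/q) * (1/p) = 1/p - 1/q := by
            rw [sub_mul, one_mul, eB]
          rw [eA, eB]


lemma dp_conj {a b c : ℕ} (M₁ : Matrix (Fin a) (Fin b) ℝ) (M₂ : Matrix (Fin a) (Fin c) ℝ)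
    (x : Fin b → ℝ) (y : Fin c → ℝ) :
    (M₁ *ᵥ x) ⬝ᵥ (M₂ *ᵥ y) = x ⬝ᵥ ((M₁ᵀ * M₂) *ᵥ y) := by
  rw [← mulVec_mulVec]
  conv_rhs => rw [dotProduct_mulVec, vecMul_transpose]

lemma psd_form {k : ℕ} {Q : Matrix (Fin k) (Fin k) ℝ} (hQ : Q.PosSemidef) (x : Fin k → ℝ) :
    0 ≤ x ⬝ᵥ (Q *ᵥ x) := by
  have := hQ.dotProduct_mulVec_nonneg x
  simpa using this

lemma conjT_eq_transpose {a b : ℕ} (M : Matrix (Fin a) (Fin b) ℝ) : Mᴴ = Mᵀ := by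
  ext i j; simp [conjTranspose_apply]

lemma mulVec_inj_of_rank {d r : ℕ} (C : Matrix (Fin d) (Fin r) ℝ) (hC : C.rank = r) :
    Function.Injective C.mulVec := by
  have h1 := LinearMap.finrank_range_add_finrank_ker C.mulVecLin
  rw [Module.finrank_pi, Fintype.card_fin] at h1
  have h2 : Module.finrank ℝ (LinearMap.range C.mulVecLin) = r := hC
  have h3 : Module.finrank ℝ (LinearMap.ker C.mulVecLin) = 0 := by omega
  have h4 : LinearMap.ker C.mulVecLin = ⊥ := Submodule.finrank_eq_zero.mp h3
  have h5 := LinearMap.ker_eq_bot.mp h4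
  intro x y hxy
  exact h5 (by simpa [Matrix.mulVecLin_apply] using hxy)

section Key
variable {nt d r : ℕ} (At : Matrix (Fin nt) (Fin d) ℝ)
  (Pt : Matrix (Fin d) (Fin d) ℝ)
  (C : Matrix (Fin d) (Fin r) ℝ)

lemma key_inj (hPt : IsMoorePenrose (Atᵀ * At) Pt) (hC : C.rank = r)
    (h₂ : ((3 / 2 : ℝ) • Pt - C * Cᵀ).PosSemidef) :
    ∀ z : Fin r → ℝ, (At * C) *ᵥ z = 0 → z = 0 := by
  intro z hz
  set M := Atᵀ * At with hM
  clear_value M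
  set w := C *ᵥ z with hw
  clear_value w
  have h1 : At *ᵥ w = 0 := by rw [hw, mulVec_mulVec]; exact hz
  have hMw : M *ᵥ w = 0 := by
    rw [hM, ← mulVec_mulVec, h1, mulVec_zero]
  have hPtw : w ⬝ᵥ (Pt *ᵥ w) = 0 := by
    have e : Pt = Pt * M * Pt := (hPt.2.1).symm
    calc w ⬝ᵥ (Pt *ᵥ w) = w ⬝ᵥ ((Pt * M * Pt) *ᵥ w) := by rw [← e]
      _ = w ⬝ᵥ ((Pt * M) *ᵥ (Pt *ᵥ w)) := by rw [mulVec_mulVec]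
      _ = (w ᵥ* (Pt * M)) ⬝ᵥ (Pt *ᵥ w) := by rw [dotProduct_mulVec]
      _ = ((Pt * M)ᵀ *ᵥ w) ⬝ᵥ (Pt *ᵥ w) := by rw [mulVec_transpose]
      _ = ((Pt * M) *ᵥ w) ⬝ᵥ (Pt *ᵥ w) := by rw [hPt.2.2.2]
      _ = (Pt *ᵥ (M *ᵥ w)) ⬝ᵥ (Pt *ᵥ w) := by rw [mulVec_mulVec]
      _ = 0 := by rw [hMw, mulVec_zero, zero_dotProduct]
  have h2 := psd_form h₂ w
  have h3 : w ⬝ᵥ ((C * Cᵀ) *ᵥ w) ≤ 0 := by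
    rw [sub_mulVec, dotProduct_sub, smul_mulVec, dotProduct_smul] at h2
    rw [hPtw] at h2
    simpa using h2
  have h4 : (Cᵀ *ᵥ w) ⬝ᵥ (Cᵀ *ᵥ w) = 0 := by
    have e := dp_conj Cᵀ Cᵀ w w
    rw [transpose_transpose] at e
    have h5 : 0 ≤ (Cᵀ *ᵥ w) ⬝ᵥ (Cᵀ *ᵥ w) := by
      apply Finset.sum_nonneg; intro i _; exact mul_self_nonneg _
    rw [e] at h5 ⊢
    linarith
  have h6 : Cᵀ *ᵥ w = 0 := dotProduct_self_eq_zero.mp h4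
  have h7 : w ⬝ᵥ w = 0 := by
    have e := dp_conj C C z z
    rw [hw, e, ← mulVec_mulVec, ← hw, h6, dotProduct_zero]
  have h8 : C *ᵥ z = 0 := dotProduct_self_eq_zero.mp (by rw [← hw]; exact h7)
  exact mulVec_inj_of_rank C hC (by rw [h8, mulVec_zero])

lemma key_B2 (hPt : IsMoorePenrose (Atᵀ * At) Pt)
    (h₁ : (C * Cᵀ - (1 / 2 : ℝ) • Pt).PosSemidef) :
    ∀ z : Fin r → ℝ,
      (1/2 : ℝ) * (z ⬝ᵥ (((At * C)ᵀ * (At * C)) *ᵥ z)) ≤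
        ((((At * C)ᵀ * (At * C)) *ᵥ z) ⬝ᵥ (((At * C)ᵀ * (At * C)) *ᵥ z)) := by
  intro z
  set M := Atᵀ * At with hM
  have hMT : Mᵀ = M := by rw [hM, transpose_mul, transpose_transpose]
  have hBC : (At * C)ᵀ * (At * C) = Cᵀ * (M * C) := by
    rw [transpose_mul, hM, Matrix.mul_assoc, Matrix.mul_assoc]
  set B := (At * C)ᵀ * (At * C) with hB
  clear_value B
  clear_value M
  rw [hBC]
  set y := (M * C) *ᵥ z with hy
  clear_value y
  have hq := psd_form h₁ y
  have h2 : (1/2 : ℝ) * (y ⬝ᵥ (Pt *ᵥ y)) ≤ y ⬝ᵥ ((C * Cᵀ) *ᵥ y) := by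
    rw [sub_mulVec, dotProduct_sub, smul_mulVec, dotProduct_smul] at hq
    simp only [smul_eq_mul] at hq
    linarith
  have e1 : Cᵀ *ᵥ y = (Cᵀ * (M * C)) *ᵥ z := by
    rw [hy, mulVec_mulVec]
  have e2 : y ⬝ᵥ ((C * Cᵀ) *ᵥ y) = ((Cᵀ * (M * C)) *ᵥ z) ⬝ᵥ ((Cᵀ * (M * C)) *ᵥ z) := by
    have e := dp_conj Cᵀ Cᵀ y y
    rw [transpose_transpose] at e
    rw [← e, e1]
  have emat : (M * C)ᵀ * (Pt * (M * C)) = Cᵀ * (M * C) := by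
    rw [transpose_mul, hMT]
    have hassoc : M * (Pt * (M * C)) = M * C := by
      calc M * (Pt * (M * C)) = M * Pt * M * C := by simp only [Matrix.mul_assoc]
        _ = M * C := by rw [hPt.1]
    rw [Matrix.mul_assoc, hassoc]
  have e3 : y ⬝ᵥ (Pt *ᵥ y) = z ⬝ᵥ ((Cᵀ * (M * C)) *ᵥ z) := by
    have e := dp_conj (M * C) (Pt * (M * C)) z z
    rw [emat] at e
    rw [hy, mulVec_mulVec, e]
  rw [← e2, ← e3]
  exact h2

open scoped MatrixOrder in
lemma key_lower (hPt : IsMoorePenrose (Atᵀ * At) Pt) (hC : C.rank = r)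
    (h₁ : (C * Cᵀ - (1 / 2 : ℝ) • Pt).PosSemidef)
    (h₂ : ((3 / 2 : ℝ) • Pt - C * Cᵀ).PosSemidef) :
    ∀ z : Fin r → ℝ, (1/2 : ℝ) * (z ⬝ᵥ z) ≤ ((At * C) *ᵥ z) ⬝ᵥ ((At * C) *ᵥ z) := by
  have hB2 := key_B2 At Pt C hPt h₁
  have hinj := key_inj At Pt C hPt hC h₂
  set X := At * C with hX
  set B := Xᵀ * X with hB
  have hBsym : Bᵀ = B := by rw [hB, transpose_mul, transpose_transpose]
  have hXB : ∀ v : Fin r → ℝ, (X *ᵥ v) ⬝ᵥ (X *ᵥ v) = v ⬝ᵥ (B *ᵥ v) := by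
    intro v; rw [dp_conj, hB]
  have hBpsd : B.PosSemidef := by
    have := posSemidef_conjTranspose_mul_self X
    rwa [conjT_eq_transpose] at this
  -- D := B*B - (1/2)•B is PSD
  have hD : (B * B - (1/2 : ℝ) • B).PosSemidef := by
    refine Matrix.PosSemidef.of_dotProduct_mulVec_nonneg ?_ ?_
    · show (B * B - (1/2 : ℝ) • B)ᴴ = _
      rw [conjT_eq_transpose, transpose_sub, transpose_smul, transpose_mul, hBsym]
    · intro x
      have hsx : star x = x := by
        funext i; exact star_trivial _
      rw [hsx, sub_mulVec, dotProduct_sub, smul_mulVec, dotProduct_smul]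
      have e : x ⬝ᵥ ((B * B) *ᵥ x) = (B *ᵥ x) ⬝ᵥ (B *ᵥ x) := by
        have := dp_conj B B x x
        rw [hBsym] at this
        exact this.symm
      rw [e]
      have := hB2 x
      simp only [smul_eq_mul, ← hX, ← hB] at this ⊢
      linarith
  -- B is invertible
  have hBunit : IsUnit B := by
    rw [← Matrix.mulVec_injective_iff_isUnit]
    intro a b hab
    have h0 : B *ᵥ (a - b) = 0 := by rw [mulVec_sub, hab, sub_self]
    have h1 : (X *ᵥ (a - b)) ⬝ᵥ (X *ᵥ (a - b)) = 0 := by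
      rw [hXB, h0, dotProduct_zero]
    have h2 : X *ᵥ (a - b) = 0 := dotProduct_self_eq_zero.mp h1
    have h3 : a - b = 0 := hinj _ h2
    exact sub_eq_zero.mp h3
  -- sqrt of B
  have hS : (CFC.sqrt B).PosSemidef := (CFC.sqrt_nonneg B).posSemidef
  set S := CFC.sqrt B with hSdef
  have hSS : S * S = B := CFC.sqrt_mul_sqrt_self B hBpsd.nonneg
  have hSH : Sᴴ = S := hS.1
  have conj := hD.mul_mul_conjTranspose_same S
  rw [hSH] at conj
  have e : S * (B * B - (1/2 : ℝ) • B) * S = B * (B * B) - (1/2 : ℝ) • (B * B) := by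
    have eSBS : S * B * S = B * B := by rw [← hSS]; simp only [Matrix.mul_assoc]
    have eSBBS : S * (B * B) * S = B * (B * B) := by rw [← hSS]; simp only [Matrix.mul_assoc]
    calc S * (B * B - (1/2 : ℝ) • B) * S
        = S * (B * B) * S - (1/2 : ℝ) • (S * B * S) := by
          rw [Matrix.mul_sub, Matrix.sub_mul, Matrix.mul_smul, Matrix.smul_mul]
      _ = B * (B * B) - (1/2 : ℝ) • (B * B) := by rw [eSBS, eSBBS]
  rw [e] at conj
  -- final computation
  intro z
  obtain ⟨u, hu⟩ : ∃ u, B *ᵥ u = z := by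
    refine ⟨(↑hBunit.unit⁻¹ : Matrix (Fin r) (Fin r) ℝ) *ᵥ z, ?_⟩
    rw [mulVec_mulVec]
    have h9 : B * (↑hBunit.unit⁻¹ : Matrix (Fin r) (Fin r) ℝ) = 1 := by
      have h10 := hBunit.unit.mul_inv
      rwa [hBunit.unit_spec] at h10
    rw [h9, one_mulVec]
  have q1 := psd_form conj u
  rw [sub_mulVec, dotProduct_sub, smul_mulVec, dotProduct_smul] at q1
  simp only [smul_eq_mul] at q1
  have e1 : z ⬝ᵥ z = u ⬝ᵥ ((B * B) *ᵥ u) := by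
    rw [← hu]
    have := dp_conj B B u u
    rw [hBsym] at this
    exact this
  have e2 : z ⬝ᵥ (B *ᵥ z) = u ⬝ᵥ ((B * (B * B)) *ᵥ u) := by
    rw [← hu, mulVec_mulVec]
    have := dp_conj B (B * B) u u
    rw [hBsym] at this
    exact this
  have e3 := hXB z
  rw [e3, e2]
  linarith [q1, e1 ▸ le_refl (z ⬝ᵥ z)]


lemma key_trace (hPt : IsMoorePenrose (Atᵀ * At) Pt)
    (h₂ : ((3 / 2 : ℝ) • Pt - C * Cᵀ).PosSemidef) :
    ∑ j, ∑ i, (At * C) i j * (At * C) i j ≤ 3/2 * d := by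
  set M := Atᵀ * At with hM
  set X := At * C with hX
  -- LHS = trace (Xᵀ * X)
  have hLHS : ∑ j, ∑ i, X i j * X i j = (Xᵀ * X).trace := by
    rw [Matrix.trace]
    apply Finset.sum_congr rfl
    intro j _
    rw [Matrix.diag_apply, Matrix.mul_apply]
    apply Finset.sum_congr rfl
    intro i _
    rw [transpose_apply]
  have t1 : (Xᵀ * X).trace = (M * (C * Cᵀ)).trace := by
    have e : Xᵀ * X = Cᵀ * ((M * C)) := by
      rw [hX, transpose_mul, hM, Matrix.mul_assoc, Matrix.mul_assoc]
    rw [e, Matrix.trace_mul_comm, Matrix.mul_assoc]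
  -- diag entries of PSD matrices are nonneg
  have diag_nn : ∀ {k : ℕ} (Q : Matrix (Fin k) (Fin k) ℝ), Q.PosSemidef → ∀ i, 0 ≤ Q i i := by
    intro k Q hQ i
    have := hQ.dotProduct_mulVec_nonneg (Pi.single i 1)
    simpa using this
  -- t2 : 0 ≤ trace (M * ((3/2)•Pt - C*Cᵀ))
  have t2 : 0 ≤ (M * ((3/2 : ℝ) • Pt - C * Cᵀ)).trace := by
    set Y := (3/2 : ℝ) • Pt - C * Cᵀ with hY
    have e : (M * Y).trace = (At * Y * Atᵀ).trace := by
      rw [hM, Matrix.mul_assoc, Matrix.trace_mul_comm]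
    rw [e]
    have hpsd : (At * Y * Atᵀ).PosSemidef := by
      have := h₂.mul_mul_conjTranspose_same At
      rwa [conjT_eq_transpose] at this
    rw [Matrix.trace]
    apply Finset.sum_nonneg
    intro i _
    exact diag_nn _ hpsd i
  -- t3 : trace (M * Pt) ≤ d
  have t3 : (M * Pt).trace ≤ (d : ℝ) := by
    set Q := M * Pt with hQ
    have hQsym : Qᵀ = Q := hPt.2.2.1
    have hQidem : Q * Q = Q := by
      rw [hQ, ← Matrix.mul_assoc, hPt.1]
    have hdiag : ∀ i, Q i i ≤ 1 := by
      intro i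
      have h6 : Q i i = ∑ k, Q i k * Q i k := by
        conv_lhs => rw [← hQidem]
        rw [Matrix.mul_apply]
        apply Finset.sum_congr rfl
        intro k _
        congr 1
        simpa using congrFun (congrFun hQsym i) k
      have h7 : Q i i * Q i i ≤ ∑ k, Q i k * Q i k :=
        Finset.single_le_sum (f := fun k => Q i k * Q i k)
          (fun k _ => mul_self_nonneg _) (Finset.mem_univ i)
      nlinarith [h6, h7]
    calc Q.trace = ∑ i, Q i i := rfl
      _ ≤ ∑ _i : Fin d, (1:ℝ) := Finset.sum_le_sum fun i _ => hdiag i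
      _ = (d : ℝ) := by simp
  -- combine
  have texp : (M * ((3/2 : ℝ) • Pt - C * Cᵀ)).trace
      = 3/2 * (M * Pt).trace - (M * (C * Cᵀ)).trace := by
    rw [Matrix.mul_sub, Matrix.trace_sub, Matrix.mul_smul, Matrix.trace_smul, smul_eq_mul]
  rw [hLHS, t1]
  rw [texp] at t2
  nlinarith [t2, t3]

/-- A well-conditioned ℓ_p basis from an ℓ_{p'}-approximation: paper's Lemma 5.11 with
explicit constants. -/
theorem basis_from_lp'_approx (p p' : ℝ) (hp : 1 ≤ p) (hpp' : p ≤ p') (hp'2 : p' ≤ 2)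
    (n nt d r : ℕ) (A : Matrix (Fin n) (Fin d) ℝ) (hrank : A.rank = r)
    (At : Matrix (Fin nt) (Fin d) ℝ)
    (happrox : ∀ x : Fin d → ℝ,
      (1 / 2 : ℝ) * lpNorm p' (A.mulVec x) ≤ lpNorm p' (At.mulVec x) ∧
      lpNorm p' (At.mulVec x) ≤ (3 / 2 : ℝ) * lpNorm p' (A.mulVec x))
    (Pt : Matrix (Fin d) (Fin d) ℝ) (hPt : IsMoorePenrose (Atᵀ * At) Pt)
    (C : Matrix (Fin d) (Fin r) ℝ) (hC : C.rank = r)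
    (h₁ : (C * Cᵀ - (1 / 2 : ℝ) • Pt).PosSemidef)
    (h₂ : ((3 / 2 : ℝ) • Pt - C * Cᵀ).PosSemidef) :
    entryNorm p (A * C) ≤
      2 * Real.sqrt 2 * ((n : ℝ) * d) ^ (1 / p - 1 / p') * ((nt : ℝ) * d) ^ (1 / p' - 1 / 2) *
        (d : ℝ) ^ ((1 : ℝ) / 2) ∧
    (∀ z : Fin r → ℝ, dualNorm p z ≤ 3 * lpNorm p ((A * C).mulVec z)) ∧
    (∃ α β : ℝ,
      entryNorm p (A * C) ≤ α ∧
      (∀ z : Fin r → ℝ, dualNorm p z ≤ β * lpNorm p ((A * C).mulVec z)) ∧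
      α * β ≤ 6 * Real.sqrt 2 * (n : ℝ) ^ (1 / p - 1 / p') * (nt : ℝ) ^ (1 / p' - 1 / 2) *
        (d : ℝ) ^ (1 / p)) := by
  have hp0 : (0:ℝ) < p := lt_of_lt_of_le one_pos hp
  have hp'0 : (0:ℝ) < p' := lt_of_lt_of_le hp0 hpp'
  have low := key_lower At Pt C hPt hC h₁ h₂
  have htr := key_trace At Pt C hPt h₂
  have sqrt2_le : Real.sqrt 2 ≤ 2 := by
    nlinarith [Real.sq_sqrt (by norm_num : (0:ℝ) ≤ 2), Real.sqrt_nonneg 2]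
  have lpnn : ∀ {k : ℕ} (s : ℝ) (v : Fin k → ℝ), 0 ≤ lpNorm s v := fun s v =>
    Real.rpow_nonneg (sum_abs_rpow_nonneg v s) _
  have sq_abs_rpow : ∀ x : ℝ, |x| ^ (2:ℝ) = x * x := by
    intro x
    rw [show (2:ℝ) = ((2:ℕ):ℝ) by norm_num, Real.rpow_natCast, sq_abs, sq]
  -- Claim 2
  have claim2 : ∀ z : Fin r → ℝ, dualNorm p z ≤ 3 * lpNorm p ((A * C) *ᵥ z) := by
    intro z
    have l2z : ∑ i, |z i| ^ (2:ℝ) = z ⬝ᵥ z :=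
      Finset.sum_congr rfl fun i _ => sq_abs_rpow (z i)
    have l2X : ∑ i, |((At * C) *ᵥ z) i| ^ (2:ℝ) = ((At * C) *ᵥ z) ⬝ᵥ ((At * C) *ᵥ z) :=
      Finset.sum_congr rfl fun i _ => sq_abs_rpow _
    have dXnn : (0:ℝ) ≤ ((At * C) *ᵥ z) ⬝ᵥ ((At * C) *ᵥ z) := by
      apply Finset.sum_nonneg; intro i _; exact mul_self_nonneg _
    have step1 : dualNorm p z ≤ (∑ i, |z i| ^ (2:ℝ)) ^ (1/(2:ℝ)) := by
      by_cases hp1 : p = 1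
      · rw [dualNorm, if_pos hp1]
        apply Real.iSup_le _ (Real.rpow_nonneg (sum_abs_rpow_nonneg z 2) _)
        intro i
        have h1 : |z i| ^ (2:ℝ) ≤ ∑ k, |z k| ^ (2:ℝ) :=
          Finset.single_le_sum (f := fun k => |z k| ^ (2:ℝ))
            (fun k _ => Real.rpow_nonneg (abs_nonneg _) _) (Finset.mem_univ i)
        calc |z i| = (|z i| ^ (2:ℝ)) ^ (1/(2:ℝ)) := by
              rw [← Real.rpow_mul (abs_nonneg _)]; norm_num
          _ ≤ (∑ k, |z k| ^ (2:ℝ)) ^ (1/(2:ℝ)) :=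
              Real.rpow_le_rpow (Real.rpow_nonneg (abs_nonneg _) _) h1 (by norm_num)
      · rw [dualNorm, if_neg hp1, lpNorm]
        have hp1' : 1 < p := lt_of_le_of_ne hp (Ne.symm hp1)
        have h2q : (2:ℝ) ≤ p/(p-1) := by
          rw [le_div_iff₀ (by linarith)]
          nlinarith [hpp', hp'2]
        exact lp_anti z (by norm_num) h2q
    have step2 : (∑ i, |z i| ^ (2:ℝ)) ^ (1/(2:ℝ)) ≤
        Real.sqrt 2 * (∑ i, |((At * C) *ᵥ z) i| ^ (2:ℝ)) ^ (1/(2:ℝ)) := by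
      have h1 : ∑ i, |z i| ^ (2:ℝ) ≤ 2 * ∑ i, |((At * C) *ᵥ z) i| ^ (2:ℝ) := by
        rw [l2z, l2X]; linarith [low z]
      calc (∑ i, |z i| ^ (2:ℝ)) ^ (1/(2:ℝ))
          ≤ (2 * ∑ i, |((At * C) *ᵥ z) i| ^ (2:ℝ)) ^ (1/(2:ℝ)) :=
            Real.rpow_le_rpow (sum_abs_rpow_nonneg z 2) h1 (by norm_num)
        _ = Real.sqrt 2 * (∑ i, |((At * C) *ᵥ z) i| ^ (2:ℝ)) ^ (1/(2:ℝ)) := by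
            rw [Real.mul_rpow (by norm_num) (sum_abs_rpow_nonneg _ 2), Real.sqrt_eq_rpow]
    have step3 : (∑ i, |((At * C) *ᵥ z) i| ^ (2:ℝ)) ^ (1/(2:ℝ)) ≤
        lpNorm p' ((At * C) *ᵥ z) := by
      rw [lpNorm]
      exact lp_anti ((At * C) *ᵥ z) hp'0 hp'2
    have step4 : lpNorm p' ((At * C) *ᵥ z) ≤ 3/2 * lpNorm p' ((A * C) *ᵥ z) := by
      have h := (happrox (C *ᵥ z)).2
      rw [mulVec_mulVec, mulVec_mulVec] at h
      exact h
    have step5 : lpNorm p' ((A * C) *ᵥ z) ≤ lpNorm p ((A * C) *ᵥ z) := by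
      rw [lpNorm, lpNorm]
      exact lp_anti _ hp0 hpp'
    have hnn : 0 ≤ lpNorm p' ((A * C) *ᵥ z) := lpnn _ _
    have hnn2 : 0 ≤ (∑ i, |((At * C) *ᵥ z) i| ^ (2:ℝ)) ^ (1/(2:ℝ)) :=
      Real.rpow_nonneg (sum_abs_rpow_nonneg _ 2) _
    have hs2 : 0 ≤ Real.sqrt 2 := Real.sqrt_nonneg 2
    calc dualNorm p z ≤ Real.sqrt 2 * (∑ i, |((At * C) *ᵥ z) i| ^ (2:ℝ)) ^ (1/(2:ℝ)) :=
          le_trans step1 step2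
      _ ≤ Real.sqrt 2 * (3/2 * lpNorm p' ((A * C) *ᵥ z)) := by
          apply mul_le_mul_of_nonneg_left _ hs2
          exact le_trans step3 step4
      _ ≤ 2 * (3/2 * lpNorm p' ((A * C) *ᵥ z)) := by
          apply mul_le_mul_of_nonneg_right sqrt2_le
          positivity
      _ = 3 * lpNorm p' ((A * C) *ᵥ z) := by ring
      _ ≤ 3 * lpNorm p ((A * C) *ᵥ z) := by linarith [step5]
  -- Claim 1
  have claim1 : entryNorm p (A * C) ≤
      2 * Real.sqrt 2 * ((n : ℝ) * d) ^ (1 / p - 1 / p') * ((nt : ℝ) * d) ^ (1 / p' - 1 / 2) *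
        (d : ℝ) ^ ((1 : ℝ) / 2) := by
    set c : Fin r → ℝ := fun j => lpNorm p' (fun i => (A * C) i j) with hc
    set t : Fin r → ℝ := fun j => (∑ i, |(At * C) i j| ^ (2:ℝ)) ^ (1/(2:ℝ)) with ht
    have hrd : (r:ℝ) ≤ (d:ℝ) := by
      have h := C.rank_le_card_height
      rw [hC, Fintype.card_fin] at h
      exact_mod_cast h
    have hae : (0:ℝ) ≤ 1/p - 1/p' := by
      have := one_div_le_one_div_of_le hp0 hpp'
      linarith
    have hbe : (0:ℝ) ≤ 1/p' - 1/2 := by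
      have := one_div_le_one_div_of_le hp'0 hp'2
      linarith
    have hEnn : ∀ s : ℝ, 0 ≤ entryNorm s (A * C) := fun s =>
      Real.rpow_nonneg (Finset.sum_nonneg fun i _ =>
        Finset.sum_nonneg fun j _ => Real.rpow_nonneg (abs_nonneg _) _) _
    have hcnn : ∀ j, 0 ≤ c j := fun j => lpnn _ _
    have htnn : ∀ j, 0 ≤ t j := fun j => Real.rpow_nonneg (sum_abs_rpow_nonneg _ _) _
    have eprod : ∀ s : ℝ, (∑ i, ∑ j, |(A * C) i j| ^ s)
        = ∑ x : Fin n × Fin r, |(A * C) x.1 x.2| ^ s :=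
      fun s => Eq.symm (Fintype.sum_prod_type (fun x : Fin n × Fin r => |(A * C) x.1 x.2| ^ s))
    have s1 : entryNorm p (A * C) ≤ ((n:ℝ) * (d:ℝ)) ^ (1/p - 1/p') * entryNorm p' (A * C) := by
      rw [entryNorm, entryNorm, eprod, eprod]
      have h := lp_card (v := fun x : Fin n × Fin r => (A * C) x.1 x.2) hp0 hpp'
      rw [Fintype.card_prod, Fintype.card_fin, Fintype.card_fin, Nat.cast_mul] at h
      refine le_trans h (mul_le_mul_of_nonneg_right ?_ (Real.rpow_nonneg
        (Finset.sum_nonneg fun x _ => Real.rpow_nonneg (abs_nonneg _) _) _))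
      exact Real.rpow_le_rpow (by positivity)
        (mul_le_mul_of_nonneg_left hrd (Nat.cast_nonneg n)) hae
    have ecol : ∀ j, (c j) ^ p' = ∑ i, |(A * C) i j| ^ p' := by
      intro j
      simp only [hc, lpNorm]
      rw [← Real.rpow_mul (sum_abs_rpow_nonneg _ _), one_div_mul_cancel hp'0.ne', Real.rpow_one]
    have s2 : entryNorm p' (A * C) ≤
        (d:ℝ) ^ (1/p' - 1/2) * (∑ j, |c j| ^ (2:ℝ)) ^ (1/(2:ℝ)) := by
      have e : entryNorm p' (A * C) = (∑ j, |c j| ^ p') ^ (1/p') := by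
        rw [entryNorm, Finset.sum_comm]
        congr 1
        apply Finset.sum_congr rfl
        intro j _
        rw [abs_of_nonneg (hcnn j), ecol j]
      rw [e]
      have h := lp_card (v := c) hp'0 hp'2
      rw [Fintype.card_fin] at h
      refine le_trans h (mul_le_mul_of_nonneg_right ?_ (Real.rpow_nonneg
        (sum_abs_rpow_nonneg c 2) _))
      exact Real.rpow_le_rpow (Nat.cast_nonneg r) hrd hbe
    have s3 : ∀ j, c j ≤ 2 * ((nt:ℝ) ^ (1/p' - 1/2) * t j) := by
      intro j
      have hxj : (fun i => (A * C) i j) = A *ᵥ (C *ᵥ Pi.single j 1) := by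
        rw [mulVec_mulVec]
        funext i
        simp [mulVec_single]
      have hXj : (fun i => (At * C) i j) = At *ᵥ (C *ᵥ Pi.single j 1) := by
        rw [mulVec_mulVec]
        funext i
        simp [mulVec_single]
      have h1 := (happrox (C *ᵥ Pi.single j 1)).1
      have h2 : lpNorm p' (At *ᵥ (C *ᵥ Pi.single j 1)) ≤ (nt:ℝ) ^ (1/p' - 1/2) * t j := by
        rw [← hXj, lpNorm]
        have h := lp_card (v := fun i => (At * C) i j) hp'0 hp'2
        rw [Fintype.card_fin] at h
        simpa [ht] using h
      calc c j = lpNorm p' (A *ᵥ (C *ᵥ Pi.single j 1)) := by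
            simp only [hc]; rw [hxj]
        _ ≤ 2 * lpNorm p' (At *ᵥ (C *ᵥ Pi.single j 1)) := by linarith [h1]
        _ ≤ 2 * ((nt:ℝ) ^ (1/p' - 1/2) * t j) := by linarith [h2]
    have s4 : (∑ j, |c j| ^ (2:ℝ)) ^ (1/(2:ℝ)) ≤
        2 * (nt:ℝ) ^ (1/p' - 1/2) * (∑ j, |t j| ^ (2:ℝ)) ^ (1/(2:ℝ)) := by
      set K := 2 * (nt:ℝ) ^ (1/p' - 1/2) with hK
      have hKnn : 0 ≤ K := by positivity
      have h1 : ∀ j, |c j| ^ (2:ℝ) ≤ K ^ (2:ℝ) * |t j| ^ (2:ℝ) := by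
        intro j
        rw [abs_of_nonneg (hcnn j), abs_of_nonneg (htnn j), ← Real.mul_rpow hKnn (htnn j)]
        apply Real.rpow_le_rpow (hcnn j) _ (by norm_num)
        calc c j ≤ 2 * ((nt:ℝ) ^ (1/p' - 1/2) * t j) := s3 j
          _ = K * t j := by rw [hK]; ring
      calc (∑ j, |c j| ^ (2:ℝ)) ^ (1/(2:ℝ))
          ≤ (∑ j, K ^ (2:ℝ) * |t j| ^ (2:ℝ)) ^ (1/(2:ℝ)) :=
            Real.rpow_le_rpow (sum_abs_rpow_nonneg c 2)
              (Finset.sum_le_sum fun j _ => h1 j) (by norm_num)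
        _ = (K ^ (2:ℝ)) ^ (1/(2:ℝ)) * (∑ j, |t j| ^ (2:ℝ)) ^ (1/(2:ℝ)) := by
            rw [← Finset.mul_sum,
              Real.mul_rpow (Real.rpow_nonneg hKnn _) (sum_abs_rpow_nonneg t 2)]
        _ = K * (∑ j, |t j| ^ (2:ℝ)) ^ (1/(2:ℝ)) := by
            rw [← Real.rpow_mul hKnn, show (2:ℝ) * (1/2) = 1 by norm_num, Real.rpow_one]
    have s5 : ∑ j, |t j| ^ (2:ℝ) ≤ 3/2 * d := by
      have e : ∀ j, |t j| ^ (2:ℝ) = ∑ i, (At * C) i j * (At * C) i j := by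
        intro j
        rw [abs_of_nonneg (htnn j)]
        simp only [ht]
        rw [← Real.rpow_mul (sum_abs_rpow_nonneg _ _),
          show (1/(2:ℝ)) * 2 = 1 by norm_num, Real.rpow_one]
        exact Finset.sum_congr rfl fun i _ => sq_abs_rpow _
      calc ∑ j, |t j| ^ (2:ℝ) = ∑ j, ∑ i, (At * C) i j * (At * C) i j :=
            Finset.sum_congr rfl fun j _ => e j
        _ ≤ 3/2 * d := htr
    have s6 : (∑ j, |t j| ^ (2:ℝ)) ^ (1/(2:ℝ)) ≤ Real.sqrt 2 * (d:ℝ) ^ ((1:ℝ)/2) := by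
      calc (∑ j, |t j| ^ (2:ℝ)) ^ (1/(2:ℝ)) ≤ ((3/2:ℝ) * d) ^ (1/(2:ℝ)) :=
            Real.rpow_le_rpow (sum_abs_rpow_nonneg t 2) s5 (by norm_num)
        _ = (3/2:ℝ) ^ (1/(2:ℝ)) * (d:ℝ) ^ ((1:ℝ)/2) :=
            Real.mul_rpow (by norm_num) (Nat.cast_nonneg d)
        _ ≤ Real.sqrt 2 * (d:ℝ) ^ ((1:ℝ)/2) := by
            apply mul_le_mul_of_nonneg_right _ (Real.rpow_nonneg (Nat.cast_nonneg d) _)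
            rw [Real.sqrt_eq_rpow]
            exact Real.rpow_le_rpow (by norm_num) (by norm_num) (by norm_num)
    have hnd : (0:ℝ) ≤ (n:ℝ) * (d:ℝ) := by positivity
    calc entryNorm p (A * C) ≤ ((n:ℝ) * (d:ℝ)) ^ (1/p - 1/p') * entryNorm p' (A * C) := s1
      _ ≤ ((n:ℝ) * (d:ℝ)) ^ (1/p - 1/p') *
          ((d:ℝ) ^ (1/p' - 1/2) * (∑ j, |c j| ^ (2:ℝ)) ^ (1/(2:ℝ))) :=
          mul_le_mul_of_nonneg_left s2 (Real.rpow_nonneg hnd _)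
      _ ≤ ((n:ℝ) * (d:ℝ)) ^ (1/p - 1/p') * ((d:ℝ) ^ (1/p' - 1/2) *
          (2 * (nt:ℝ) ^ (1/p' - 1/2) * (∑ j, |t j| ^ (2:ℝ)) ^ (1/(2:ℝ)))) := by
          apply mul_le_mul_of_nonneg_left _ (Real.rpow_nonneg hnd _)
          exact mul_le_mul_of_nonneg_left s4 (Real.rpow_nonneg (Nat.cast_nonneg d) _)
      _ ≤ ((n:ℝ) * (d:ℝ)) ^ (1/p - 1/p') * ((d:ℝ) ^ (1/p' - 1/2) *
          (2 * (nt:ℝ) ^ (1/p' - 1/2) * (Real.sqrt 2 * (d:ℝ) ^ ((1:ℝ)/2)))) := by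
          apply mul_le_mul_of_nonneg_left _ (Real.rpow_nonneg hnd _)
          apply mul_le_mul_of_nonneg_left _ (Real.rpow_nonneg (Nat.cast_nonneg d) _)
          exact mul_le_mul_of_nonneg_left s6 (by positivity)
      _ = 2 * Real.sqrt 2 * ((n:ℝ) * (d:ℝ)) ^ (1/p - 1/p') *
          ((nt:ℝ) ^ (1/p' - 1/2) * (d:ℝ) ^ (1/p' - 1/2)) * (d:ℝ) ^ ((1:ℝ)/2) := by ring
      _ = 2 * Real.sqrt 2 * ((n:ℝ) * d) ^ (1/p - 1/p') * ((nt:ℝ) * d) ^ (1/p' - 1/2) *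
          (d:ℝ) ^ ((1:ℝ)/2) := by
          rw [← Real.mul_rpow (Nat.cast_nonneg nt) (Nat.cast_nonneg d)]
  refine ⟨claim1, claim2, ?_⟩
  refine ⟨2 * Real.sqrt 2 * ((n : ℝ) * d) ^ (1 / p - 1 / p') * ((nt : ℝ) * d) ^ (1 / p' - 1 / 2) *
      (d : ℝ) ^ ((1 : ℝ) / 2), 3, claim1, claim2, ?_⟩
  have e1 : ((n : ℝ) * d) ^ (1 / p - 1 / p') = (n:ℝ) ^ (1 / p - 1 / p') * (d:ℝ) ^ (1 / p - 1 / p') :=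
    Real.mul_rpow (Nat.cast_nonneg n) (Nat.cast_nonneg d)
  have e2 : ((nt : ℝ) * d) ^ (1 / p' - 1 / 2) =
      (nt:ℝ) ^ (1 / p' - 1 / 2) * (d:ℝ) ^ (1 / p' - 1 / 2) :=
    Real.mul_rpow (Nat.cast_nonneg nt) (Nat.cast_nonneg d)
  have e3 : (d:ℝ) ^ (1 / p - 1 / p') * ((d:ℝ) ^ (1 / p' - 1 / 2) * (d:ℝ) ^ ((1:ℝ)/2)) =
      (d:ℝ) ^ (1/p) := by
    rw [← Real.rpow_add' (Nat.cast_nonneg d) (by rw [show (1/p' - 1/2) + (1:ℝ)/2 = 1/p' by ring]; positivity)]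
    rw [← Real.rpow_add' (Nat.cast_nonneg d)
      (by rw [show (1/p - 1/p') + (1/p' - 1/2 + 1/2) = 1/p by ring]; positivity)]
    congr 1
    ring
  apply le_of_eq
  rw [e1, e2]
  calc 2 * Real.sqrt 2 * ((n:ℝ) ^ (1 / p - 1 / p') * (d:ℝ) ^ (1 / p - 1 / p')) *
        ((nt:ℝ) ^ (1 / p' - 1 / 2) * (d:ℝ) ^ (1 / p' - 1 / 2)) * (d : ℝ) ^ ((1 : ℝ) / 2) * 3
      = 6 * Real.sqrt 2 * (n:ℝ) ^ (1 / p - 1 / p') * (nt:ℝ) ^ (1 / p' - 1 / 2) *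
        ((d:ℝ) ^ (1 / p - 1 / p') * ((d:ℝ) ^ (1 / p' - 1 / 2) * (d:ℝ) ^ ((1:ℝ)/2))) := by ring
    _ = 6 * Real.sqrt 2 * (n:ℝ) ^ (1 / p - 1 / p') * (nt:ℝ) ^ (1 / p' - 1 / 2) *
        (d:ℝ) ^ (1/p) := by rw [e3]
end Key
end

section
/- Let k, R, d be positive integers with R ≥ e², and let μ be the probability measure on real k × R matrices under which all entries are independent standard Gaussians (mean 0, variance 1). Then for every fixed real R × d matrix M, μ({U : ‖U M‖_F² < (k/R)·‖M‖_F²}) ≤ d · R^{−k/4}, where ‖·‖_F denotes the Frobenius norm. -/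
open Matrix BigOperators MeasureTheory ProbabilityTheory
open scoped ENNReal NNReal

/-- The squared Frobenius norm of a matrix. -/
noncomputable def frobSq {a b : ℕ} (M : Matrix (Fin a) (Fin b) ℝ) : ℝ :=
  ∑ i, ∑ j, (M i j) ^ 2

section Helpers
open Real

lemma integral_exp_quad {a : ℝ} (ha : 0 < a) (b : ℝ) :
    ∫ x : ℝ, Real.exp (-a * x ^ 2 + b * x)
      = Real.sqrt (π / a) * Real.exp (b ^ 2 / (4 * a)) := by
  have h : ∀ x : ℝ, -a * x ^ 2 + b * x
      = b ^ 2 / (4 * a) + -a * (x - b / (2 * a)) ^ 2 := by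
    intro x; field_simp; ring
  simp_rw [h, Real.exp_add]
  rw [MeasureTheory.integral_const_mul]
  rw [show (∫ x : ℝ, Real.exp (-a * (x - b / (2 * a)) ^ 2))
      = ∫ x : ℝ, Real.exp (-a * x ^ 2) from
    integral_sub_right_eq_self (fun x => Real.exp (-a * x ^ 2)) (b / (2 * a))]
  rw [integral_gaussian]
  ring

lemma gauss_integral_sq {t : ℝ} (ht : 0 ≤ t) (b c : ℝ) :
    ∫ x, Real.exp (-(t * (c + b * x) ^ 2)) ∂(gaussianReal 0 1)
      = Real.exp (-(t * c ^ 2) / (1 + 2 * t * b ^ 2)) / Real.sqrt (1 + 2 * t * b ^ 2) := by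
  have hD : (0:ℝ) < 1 + 2 * t * b ^ 2 := by positivity
  have hα : (0:ℝ) < t * b ^ 2 + 1/2 := by positivity
  rw [gaussianReal_of_var_ne_zero 0 one_ne_zero]
  rw [show gaussianPDF 0 1 = fun x => ((gaussianPDFReal 0 1 x).toNNReal : ℝ≥0∞) from rfl]
  rw [integral_withDensity_eq_integral_smul
    (measurable_gaussianPDFReal 0 1).real_toNNReal]
  have hpdf : ∀ x : ℝ, ((gaussianPDFReal 0 1 x).toNNReal : ℝ)
      = (Real.sqrt (2 * π))⁻¹ * Real.exp (-(x ^ 2) / 2) := by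
    intro x
    rw [Real.coe_toNNReal _ (gaussianPDFReal_nonneg 0 1 x)]
    simp [gaussianPDFReal]
  have key : ∀ x : ℝ, ((gaussianPDFReal 0 1 x).toNNReal : ℝ≥0) • Real.exp (-(t * (c + b * x) ^ 2))
      = (Real.sqrt (2 * π))⁻¹ * Real.exp (-(t * c ^ 2))
        * Real.exp (-(t * b ^ 2 + 1/2) * x ^ 2 + (-(2 * t * b * c)) * x) := by
    intro x
    rw [NNReal.smul_def, hpdf x, smul_eq_mul, mul_assoc, mul_assoc, ← Real.exp_add, ← Real.exp_add]
    congr 2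
    ring
  simp_rw [key]
  rw [MeasureTheory.integral_const_mul, integral_exp_quad hα]
  have h1 : Real.exp (-(t * c ^ 2)) * Real.exp ((-(2 * t * b * c)) ^ 2 / (4 * (t * b ^ 2 + 1/2)))
      = Real.exp (-(t * c ^ 2) / (1 + 2 * t * b ^ 2)) := by
    rw [← Real.exp_add]; congr 1; field_simp; ring
  have h2 : (Real.sqrt (2 * π))⁻¹ * Real.sqrt (π / (t * b ^ 2 + 1/2))
      = (Real.sqrt (1 + 2 * t * b ^ 2))⁻¹ := by
    rw [← Real.sqrt_inv, ← Real.sqrt_mul (by positivity), ← Real.sqrt_inv]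
    congr 1
    field_simp
    ring
  calc (Real.sqrt (2 * π))⁻¹ * Real.exp (-(t * c ^ 2))
        * (Real.sqrt (π / (t * b ^ 2 + 1/2)) * Real.exp ((-(2 * t * b * c)) ^ 2 / (4 * (t * b ^ 2 + 1/2))))
      = ((Real.sqrt (2 * π))⁻¹ * Real.sqrt (π / (t * b ^ 2 + 1/2)))
        * (Real.exp (-(t * c ^ 2)) * Real.exp ((-(2 * t * b * c)) ^ 2 / (4 * (t * b ^ 2 + 1/2)))) := by
        ring
    _ = Real.exp (-(t * c ^ 2) / (1 + 2 * t * b ^ 2)) / Real.sqrt (1 + 2 * t * b ^ 2) := by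
        rw [h1, h2, inv_mul_eq_div]

lemma pi_gauss_integral : ∀ (n : ℕ) {t : ℝ}, 0 ≤ t → ∀ (v : Fin n → ℝ) (c : ℝ),
    (∫ u, Real.exp (-(t * (c + ∑ r, v r * u r) ^ 2))
        ∂(Measure.pi fun _ : Fin n => gaussianReal 0 1))
      = Real.exp (-(t * c ^ 2) / (1 + 2 * t * ∑ r, v r ^ 2))
          / Real.sqrt (1 + 2 * t * ∑ r, v r ^ 2) := by
  intro n
  induction n with
  | zero =>
    intro t ht v c
    simp [integral_const]
  | succ n ih =>
    intro t ht v c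
    have hmp := (measurePreserving_piFinSuccAbove
      (fun _ : Fin (n + 1) => gaussianReal 0 1) 0).symm
    rw [← hmp.integral_comp']
    have hS' : (0:ℝ) ≤ ∑ j, v (Fin.succ j) ^ 2 := by positivity
    set S' : ℝ := ∑ j, v (Fin.succ j) ^ 2 with hS'def
    have hD' : (0:ℝ) < 1 + 2 * t * S' := by nlinarith
    have ht2 : 0 ≤ t / (1 + 2 * t * S') := by positivity
    have hstep : ∀ p : ℝ × (Fin n → ℝ),
        Real.exp (-(t * (c + ∑ r, v r * ((MeasurableEquiv.piFinSuccAbove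
            (fun _ : Fin (n+1) => ℝ) 0).symm p) r) ^ 2))
        = Real.exp (-(t * ((c + v 0 * p.1) + ∑ j, v (Fin.succ j) * p.2 j) ^ 2)) := by
      intro p
      have harg : (c + ∑ r, v r * ((MeasurableEquiv.piFinSuccAbove
            (fun _ : Fin (n+1) => ℝ) 0).symm p) r)
          = (c + v 0 * p.1) + ∑ j, v (Fin.succ j) * p.2 j := by
        rw [Fin.sum_univ_succ]
        simp [MeasurableEquiv.piFinSuccAbove, Fin.insertNthEquiv, Fin.insertNth_zero]
        ring
      rw [harg]
    simp_rw [hstep]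
    rw [MeasureTheory.integral_prod]
    · have hin : ∀ x : ℝ,
          (∫ y, Real.exp (-(t * ((c + v 0 * x) + ∑ j, v (Fin.succ j) * y j) ^ 2))
            ∂(Measure.pi fun _ : Fin n => gaussianReal 0 1))
          = Real.exp (-((t / (1 + 2 * t * S')) * (c + v 0 * x) ^ 2))
              / Real.sqrt (1 + 2 * t * S') := by
        intro x
        rw [ih ht (fun j => v (Fin.succ j)) (c + v 0 * x), ← hS'def,
          show -(t * (c + v 0 * x) ^ 2) / (1 + 2 * t * S')
            = -((t / (1 + 2 * t * S')) * (c + v 0 * x) ^ 2) by ring]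
      simp_rw [hin]
      rw [MeasureTheory.integral_div, gauss_integral_sq ht2 (v 0) c]
      rw [Fin.sum_univ_succ, ← hS'def]
      have hD : (0:ℝ) < 1 + 2 * t * (v 0 ^ 2 + S') := by nlinarith [sq_nonneg (v 0)]
      have hE2 : 1 + 2 * (t / (1 + 2 * t * S')) * v 0 ^ 2
          = (1 + 2 * t * (v 0 ^ 2 + S')) / (1 + 2 * t * S') := by
        field_simp; ring
      rw [hE2]
      have hsq : Real.sqrt ((1 + 2 * t * (v 0 ^ 2 + S')) / (1 + 2 * t * S')) * Real.sqrt (1 + 2 * t * S')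
          = Real.sqrt (1 + 2 * t * (v 0 ^ 2 + S')) := by
        rw [← Real.sqrt_mul (by positivity)]
        congr 1
        field_simp
      rw [div_div, hsq]
      congr 1
      field_simp
    · apply Integrable.mono' (integrable_const (1:ℝ))
      · apply Continuous.aestronglyMeasurable
        fun_prop
      · refine Filter.Eventually.of_forall fun p => ?_
        rw [Real.norm_eq_abs, Real.abs_exp]
        apply Real.exp_le_one_iff.2
        have : 0 ≤ t * ((c + v 0 * p.1) + ∑ j, v (Fin.succ j) * p.2 j) ^ 2 := by positivity
        linarith

lemma integral_pi_prod_pow {E : Type*} [MeasurableSpace E] (ν : Measure E) [SigmaFinite ν]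
    (f : E → ℝ) : ∀ n : ℕ,
    (∫ x : Fin n → E, ∏ i, f (x i) ∂(Measure.pi fun _ : Fin n => ν))
      = (∫ x, f x ∂ν) ^ n := by
  intro n
  induction n with
  | zero => simp [Measure.real, Measure.pi_univ]
  | succ n ih =>
    have hmp := (measurePreserving_piFinSuccAbove (fun _ : Fin (n + 1) => ν) 0).symm
    rw [← hmp.integral_comp']
    have hstep : ∀ p : E × (Fin n → E),
        (∏ i, f (((MeasurableEquiv.piFinSuccAbove (fun _ : Fin (n+1) => E) 0).symm p) i))
        = f p.1 * ∏ j, f (p.2 j) := by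
      intro p
      rw [Fin.prod_univ_succ]
      simp [MeasurableEquiv.piFinSuccAbove, Fin.insertNthEquiv, Fin.insertNth_zero]
    simp_rw [hstep]
    rw [MeasureTheory.integral_prod_mul (f := f) (g := fun y : Fin n → E => ∏ j, f (y j)), ih,
      pow_succ, mul_comm]

lemma col_bound (k R : ℕ) (hk : 0 < k) (hR : 0 < R) (hRe : Real.exp 2 ≤ (R : ℝ))
    (v : Fin R → ℝ) :
    (Measure.pi fun _ : Fin k => Measure.pi fun _ : Fin R => gaussianReal 0 1)
      {U : Fin k → Fin R → ℝ |
        ∑ i, (∑ r, v r * U i r) ^ 2 < ((k : ℝ) / R) * ∑ r, v r ^ 2}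
      ≤ ENNReal.ofReal ((R : ℝ) ^ (-(k : ℝ) / 4)) := by
  set ν : Measure (Fin R → ℝ) := Measure.pi fun _ : Fin R => gaussianReal 0 1 with hν
  set μ : Measure (Fin k → Fin R → ℝ) := Measure.pi fun _ : Fin k => ν with hμ
  have hs0 : (0:ℝ) ≤ ∑ r, v r ^ 2 := by positivity
  rcases eq_or_lt_of_le hs0 with hs | hs
  · -- degenerate column: event is empty
    have hempty : {U : Fin k → Fin R → ℝ |
        ∑ i, (∑ r, v r * U i r) ^ 2 < ((k : ℝ) / R) * ∑ r, v r ^ 2} = ∅ := by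
      ext U
      simp only [Set.mem_setOf_eq, Set.mem_empty_iff_false, iff_false, not_lt, ← hs, mul_zero]
      positivity
    rw [hempty]
    simp
  · set s : ℝ := ∑ r, v r ^ 2 with hsdef
    have hR1 : (1:ℝ) < R := by
      have h1 : (1:ℝ) = Real.exp 0 := Real.exp_zero.symm
      calc (1:ℝ) = Real.exp 0 := h1
        _ < Real.exp 2 := Real.exp_lt_exp.2 (by norm_num)
        _ ≤ R := hRe
    have hRpos : (0:ℝ) < R := by linarith
    set t : ℝ := ((R:ℝ) - 1) / (2 * s) with htdef
    have ht : 0 ≤ t := div_nonneg (by linarith) (by positivity)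
    set a : ℝ := ((k : ℝ) / R) * s with hadef
    set X : (Fin k → Fin R → ℝ) → ℝ := fun U => ∑ i, (∑ r, v r * U i r) ^ 2 with hXdef
    have hXnn : ∀ U, 0 ≤ X U := fun U => Finset.sum_nonneg fun i _ => sq_nonneg _
    have hmeasX : Measurable X := by
      rw [hXdef]
      fun_prop
    have hE : MeasurableSet {U : Fin k → Fin R → ℝ | X U < a} :=
      measurableSet_lt hmeasX measurable_const
    have hgm : Measurable fun U => Real.exp (t * (a - X U)) :=
      Real.measurable_exp.comp ((measurable_const.sub hmeasX).const_mul t)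
    have step1 : μ {U | X U < a} ≤ ∫⁻ U, ENNReal.ofReal (Real.exp (t * (a - X U))) ∂μ := by
      rw [← lintegral_indicator_one hE]
      apply lintegral_mono
      intro U
      by_cases hU : U ∈ {U : Fin k → Fin R → ℝ | X U < a}
      · rw [Set.indicator_of_mem hU, Pi.one_apply]
        refine ENNReal.one_le_ofReal.2 (Real.one_le_exp ?_)
        have : X U < a := hU
        exact mul_nonneg ht (by linarith)
      · rw [Set.indicator_of_notMem hU]
        exact zero_le
    have hint : Integrable (fun U => Real.exp (t * (a - X U))) μ := by
      refine Integrable.mono' (integrable_const (Real.exp (t * a)))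
        hgm.aestronglyMeasurable (Filter.Eventually.of_forall fun U => ?_)
      rw [Real.norm_eq_abs, Real.abs_exp]
      refine Real.exp_le_exp.2 ?_
      have h1 : t * (a - X U) ≤ t * a := by
        apply mul_le_mul_of_nonneg_left _ ht
        linarith [hXnn U]
      exact h1
    have step2 : ∫⁻ U, ENNReal.ofReal (Real.exp (t * (a - X U))) ∂μ
        = ENNReal.ofReal (∫ U, Real.exp (t * (a - X U)) ∂μ) :=
      (ofReal_integral_eq_lintegral_ofReal hint
        (Filter.Eventually.of_forall fun U => (Real.exp_pos _).le)).symm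
    have hexp : ∀ U, Real.exp (t * (a - X U))
        = Real.exp (t * a) * ∏ i, Real.exp (-(t * ((0:ℝ) + ∑ r, v r * U i r) ^ 2)) := by
      intro U
      have h1 : t * (a - X U) = t * a + ∑ i, -(t * ((0:ℝ) + ∑ r, v r * U i r) ^ 2) := by
        simp only [zero_add, hXdef]
        rw [mul_sub, sub_eq_add_neg, Finset.mul_sum, ← Finset.sum_neg_distrib]
      rw [h1, Real.exp_add, Real.exp_sum]
    have step3 : ∫ U, Real.exp (t * (a - X U)) ∂μ
        = Real.exp (t * a) * ((Real.sqrt (R : ℝ))⁻¹) ^ k := by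
      simp_rw [hexp]
      rw [MeasureTheory.integral_const_mul, hμ,
        integral_pi_prod_pow ν (fun u => Real.exp (-(t * ((0:ℝ) + ∑ r, v r * u r) ^ 2))) k,
        hν, pi_gauss_integral R ht v 0]
      have h2 : 1 + 2 * t * ∑ r, v r ^ 2 = (R : ℝ) := by
        rw [← hsdef, htdef]
        field_simp
        ring
      rw [h2]
      norm_num
    rw [step2] at step1
    rw [step3] at step1
    refine le_trans step1 (ENNReal.ofReal_le_ofReal ?_)
    -- final numeric inequality
    have hlog : 2 ≤ Real.log R := (Real.le_log_iff_exp_le hRpos).2 hRe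
    have hA : ((Real.sqrt (R : ℝ))⁻¹) ^ k = (R : ℝ) ^ (-(k : ℝ) / 2) := by
      rw [Real.sqrt_eq_rpow, ← Real.rpow_neg_one ((R:ℝ) ^ ((1:ℝ)/2)), ← Real.rpow_natCast
        (((R:ℝ) ^ ((1:ℝ)/2)) ^ (-1:ℝ)) k, ← Real.rpow_mul hRpos.le, ← Real.rpow_mul hRpos.le]
      congr 1
      ring
    have hta : t * a = (k : ℝ) * (((R:ℝ) - 1) / (2 * R)) := by
      rw [htdef, hadef]
      field_simp
    have hB : Real.exp (t * a) ≤ (R : ℝ) ^ ((k : ℝ) / 4) := by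
      rw [hta, Real.rpow_def_of_pos hRpos]
      apply Real.exp_le_exp.2
      have h3 : ((R:ℝ) - 1) / (2 * R) ≤ Real.log R / 4 := by
        have h4 : ((R:ℝ) - 1) / (2 * R) ≤ 1 / 2 := by
          rw [div_le_div_iff₀ (by positivity) (by norm_num)]
          linarith
        linarith
      calc (k : ℝ) * (((R:ℝ) - 1) / (2 * R)) ≤ (k : ℝ) * (Real.log R / 4) :=
            mul_le_mul_of_nonneg_left h3 (Nat.cast_nonneg k)
        _ = Real.log R * ((k : ℝ) / 4) := by ring
    calc Real.exp (t * a) * ((Real.sqrt (R : ℝ))⁻¹) ^ k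
        ≤ (R : ℝ) ^ ((k : ℝ) / 4) * (R : ℝ) ^ (-(k : ℝ) / 2) := by
          rw [hA]
          exact mul_le_mul_of_nonneg_right hB (Real.rpow_nonneg hRpos.le _)
      _ = (R : ℝ) ^ (-(k : ℝ) / 4) := by
          rw [← Real.rpow_add hRpos]
          congr 1
          ring

end Helpers

/-- For i.i.d. standard Gaussian `k × R` matrices `U` with `R ≥ e²`, the probability that
`‖UM‖_F² < (k/R)‖M‖_F²` is at most `d · R^(−k/4)`. -/
theorem gaussian_frobenius_lower_tail (k R d : ℕ) (hk : 0 < k) (hR : 0 < R) (hd : 0 < d)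
    (hRe : Real.exp 2 ≤ (R : ℝ))
    (M : Matrix (Fin R) (Fin d) ℝ) :
    (Measure.pi fun _ : Fin k => Measure.pi fun _ : Fin R => gaussianReal 0 1)
        {U : Fin k → Fin R → ℝ |
          frobSq (Matrix.of U * M) < ((k : ℝ) / R) * frobSq M}
      ≤ ENNReal.ofReal ((d : ℝ) * (R : ℝ) ^ (-(k : ℝ) / 4)) := by
  set μ := (Measure.pi fun _ : Fin k => Measure.pi fun _ : Fin R => gaussianReal 0 1) with hμ
  set E : Fin d → Set (Fin k → Fin R → ℝ) := fun j =>
    {U | ∑ i, (∑ r, M r j * U i r) ^ 2 < ((k : ℝ) / R) * ∑ r, (M r j) ^ 2} with hE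
  have hsub : {U : Fin k → Fin R → ℝ |
      frobSq (Matrix.of U * M) < ((k : ℝ) / R) * frobSq M} ⊆ ⋃ j, E j := by
    intro U hU
    by_contra hcon
    simp only [Set.mem_iUnion, not_exists, hE, Set.mem_setOf_eq, not_lt] at hcon
    have hfs : frobSq (Matrix.of U * M) = ∑ j, ∑ i, (∑ r, M r j * U i r) ^ 2 := by
      rw [frobSq, Finset.sum_comm]
      refine Finset.sum_congr rfl fun j _ => Finset.sum_congr rfl fun i _ => ?_
      congr 1
      rw [Matrix.mul_apply]
      exact Finset.sum_congr rfl fun r _ => mul_comm _ _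
    have hfM : ((k : ℝ) / R) * frobSq M = ∑ j, ((k : ℝ) / R) * ∑ r, (M r j) ^ 2 := by
      rw [frobSq, Finset.sum_comm, Finset.mul_sum]
    have hle : ((k : ℝ) / R) * frobSq M ≤ frobSq (Matrix.of U * M) := by
      rw [hfs, hfM]
      exact Finset.sum_le_sum fun j _ => hcon j
    have := Set.mem_setOf_eq ▸ hU
    simp only [Set.mem_setOf_eq] at hU
    linarith
  calc μ {U : Fin k → Fin R → ℝ |
        frobSq (Matrix.of U * M) < ((k : ℝ) / R) * frobSq M}
      ≤ μ (⋃ j, E j) := measure_mono hsub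
    _ ≤ ∑' j : Fin d, μ (E j) := measure_iUnion_le E
    _ ≤ ∑' j : Fin d, ENNReal.ofReal ((R : ℝ) ^ (-(k : ℝ) / 4)) :=
        ENNReal.tsum_le_tsum fun j => col_bound k R hk hR hRe (fun r => M r j)
    _ = (d : ℝ≥0∞) * ENNReal.ofReal ((R : ℝ) ^ (-(k : ℝ) / 4)) := by
        rw [tsum_fintype]
        simp [Finset.sum_const, mul_comm]
    _ = ENNReal.ofReal ((d : ℝ) * (R : ℝ) ^ (-(k : ℝ) / 4)) := by
        rw [ENNReal.ofReal_mul (by positivity)]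
        congr 1
        simp [ENNReal.ofReal_natCast]
end
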